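/- arXiv:2212.00123 — 4 statements merged into one kernel-verified Lean document; each statement's English description precedes it below -/
import Mathlib

section
/- Let n ≥ 2 and let φ, ψ be automorphisms of F_n. If occ(u, [φ(g)]) = occ(u, [ψ(g)]) for every nontrivial g ∈ F_n and every nonempty reduced word u, then ψ^{-1} ∘ φ is an inner automorphism of F_n; that is, the assignment of subword-count data to outer automorphisms is injective (faithfulness of the representation of Out(F_n)). -/
open List

/-- A letter of the free group `F_n`: a generator index together with a sign. -/
abbrev Letter (n : ℕ) := Fin n × Bool

/-- The inverse of a letter. -/
def linv {n : ℕ} (a : Letter n) : Letter n := (a.1, !a.2)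

@[simp] lemma linv_linv {n : ℕ} (a : Letter n) : linv (linv a) = a := by
  cases a with
  | mk x b => simp [linv]

/-- The (formal) inverse of a word. -/
def wInv {n : ℕ} (w : List (Letter n)) : List (Letter n) := (w.map linv).reverse

@[simp] lemma wInv_wInv {n : ℕ} (w : List (Letter n)) : wInv (wInv w) = w := by
  simp [wInv, Function.comp_def]

/-- A word is reduced if no two consecutive letters are mutually inverse. -/
def Reduced {n : ℕ} (w : List (Letter n)) : Prop :=
  List.Chain' (fun a b => b ≠ linv a) w

/-- A word is cyclically reduced if it is reduced and its first and last letters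
are not mutually inverse. -/
def CyclicallyReduced {n : ℕ} (w : List (Letter n)) : Prop :=
  Reduced w ∧ ∀ a b, w.head? = some a → w.getLast? = some b → a ≠ linv b

/-- `lpow l m` is the `m`-fold concatenation of the list `l` with itself. -/
def lpow {α : Type*} (l : List α) : ℕ → List α
  | 0 => []
  | m + 1 => l ++ lpow l m

/-- The number of oriented occurrences of `u` in the cyclic word represented by `w`. -/
def orientedOcc {n : ℕ} (u w : List (Letter n)) : ℕ :=
  ((Finset.range w.length).filter (fun i => u <+: lpow (w.rotate i) (u.length + 1))).card

/-- `occ u w` : occurrences of the unoriented word `{u, u⁻¹}` in the cyclic word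
represented by `w`. -/
def occ {n : ℕ} (u w : List (Letter n)) : ℕ :=
  orientedOcc u w + orientedOcc (wInv u) w

lemma occ_wInv {n : ℕ} (u w : List (Letter n)) : occ (wInv u) w = occ u w := by
  simp [occ, wInv_wInv, Nat.add_comm]

/-- Occurrences of `u` as a contiguous factor of `w`. -/
def factOcc {n : ℕ} (u w : List (Letter n)) : ℕ :=
  ((Finset.range (w.length + 1)).filter (fun i => u <+: w.drop i)).card

/-- `occf u w` : occurrences of `{u, u⁻¹}` as a contiguous factor of `w`. -/
def occf {n : ℕ} (u w : List (Letter n)) : ℕ := factOcc u w + factOcc (wInv u) w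

/-- Two cyclically reduced words represent the same cyclic word iff one is a
rotation of the other or of its inverse. -/
def SameCyclicWord {n : ℕ} (v w : List (Letter n)) : Prop :=
  (∃ i, w = v.rotate i) ∨ (∃ i, w = (wInv v).rotate i)

/-- Cyclic reduction: repeatedly delete the first and last letter while they are
mutually inverse. -/
def cyclicReduce {n : ℕ} : List (Letter n) → List (Letter n)
  | [] => []
  | a :: rest =>
    if rest.getLast? = some (linv a) then cyclicReduce rest.dropLast
    else a :: rest
  termination_by w => w.length
  decreasing_by simp [List.length_dropLast] <;> omega



namespace Faithful

open FreeGroup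

variable {n : ℕ}

@[simp] lemma linv_ne (a : Letter n) : linv a ≠ a := by
  cases a with
  | mk x b => simp [linv]

@[simp] lemma ne_linv (a : Letter n) : a ≠ linv a := (linv_ne a).symm

lemma linv_inj {a b : Letter n} (h : linv a = linv b) : a = b := by
  have := congrArg linv h; simpa using this

@[simp] lemma length_wInv (w : List (Letter n)) : (wInv w).length = w.length := by
  simp [wInv]

@[simp] lemma wInv_eq_nil_iff (w : List (Letter n)) : wInv w = [] ↔ w = [] := by
  simp [wInv]

lemma head?_wInv (w : List (Letter n)) : (wInv w).head? = w.getLast?.map linv := by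
  simp [wInv, List.head?_reverse]

lemma getLast?_wInv (w : List (Letter n)) : (wInv w).getLast? = w.head?.map linv := by
  simp [wInv, List.getLast?_reverse]

lemma Reduced.tail {w : List (Letter n)} (h : Reduced w) : Reduced w.tail :=
  List.IsChain.tail h

lemma Reduced.dropLast {w : List (Letter n)} (h : Reduced w) : Reduced w.dropLast :=
  List.IsChain.prefix h (List.dropLast_prefix w)

lemma Reduced.wInv {w : List (Letter n)} (h : Reduced w) : Reduced (_root_.wInv w) := by
  rw [Reduced, _root_.wInv, List.Chain', List.isChain_reverse, List.isChain_map]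
  refine h.imp ?_
  intro a b hab
  intro hc
  apply hab
  have h2 : a = linv b := linv_inj hc
  rw [h2, linv_linv]

lemma invRev_eq_wInv (w : List (Letter n)) : FreeGroup.invRev w = wInv w := rfl

@[simp] lemma mk_singleton_inv (a : Letter n) :
    (FreeGroup.mk [a])⁻¹ = FreeGroup.mk [linv a] := by
  rw [FreeGroup.inv_mk]; rfl

lemma mk_wInv (w : List (Letter n)) : FreeGroup.mk (wInv w) = (FreeGroup.mk w)⁻¹ := by
  rw [FreeGroup.inv_mk, invRev_eq_wInv]

/-- A reduced word is its own `reduce`. -/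
lemma Reduced.reduce_eq {w : List (Letter n)} (h : Reduced w) : FreeGroup.reduce w = w := by
  induction w with
  | nil => rfl
  | cons a t ih =>
    have ht : Reduced t := h.tail
    rw [FreeGroup.reduce.cons, ih ht]
    cases t with
    | nil => rfl
    | cons b t' =>
      have hab : b ≠ linv a := (List.isChain_cons_cons.mp h).1
      have : ¬ (a.1 = b.1 ∧ a.2 = !b.2) := by
        rintro ⟨h1, h2⟩
        apply hab
        cases a; cases b
        simp only [linv] at *
        simp [h1, h2]
      simp [this]

lemma Reduced.toWord_mk {w : List (Letter n)} (h : Reduced w) :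
    (FreeGroup.mk w).toWord = w := by
  rw [FreeGroup.toWord_mk, Reduced.reduce_eq h]

lemma exists_of_not_chain' {α : Type*} {R : α → α → Prop} :
    ∀ {l : List α}, ¬ l.Chain' R → ∃ l₁ a b l₂, l = l₁ ++ a :: b :: l₂ ∧ ¬ R a b
  | [], h => absurd List.isChain_nil h
  | [a], h => absurd (List.isChain_singleton a) h
  | a :: b :: t, h => by
    rw [List.Chain', List.isChain_cons_cons] at h
    push_neg at h
    by_cases hab : R a b
    · obtain ⟨l₁, c, d, l₂, heq, hcd⟩ := exists_of_not_chain' (h hab)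
      exact ⟨a :: l₁, c, d, l₂, by simp [heq], hcd⟩
    · exact ⟨[], a, b, t, rfl, hab⟩

lemma reduced_reduce (w : List (Letter n)) : Reduced (FreeGroup.reduce w) := by
  by_contra hc
  obtain ⟨l₁, a, b, l₂, hw, hab⟩ := exists_of_not_chain' hc
  push_neg at hab
  have : FreeGroup.reduce w = l₁ ++ (a.1, a.2) :: (a.1, !a.2) :: l₂ := by
    rw [hw, hab]; rfl
  exact FreeGroup.reduce.not this

lemma reduced_toWord (g : FreeGroup (Fin n)) : Reduced g.toWord := by
  rw [← FreeGroup.mk_toWord (x := g), FreeGroup.toWord_mk]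
  exact reduced_reduce _


lemma list_strong_ind {α : Type*} {P : List α → Prop}
    (H : ∀ w, (∀ v : List α, v.length < w.length → P v) → P w) : ∀ w, P w
  | w => by
    suffices hs : ∀ k, ∀ w : List α, w.length = k → P w from hs _ w rfl
    intro k
    induction k using Nat.strong_induction_on with
    | _ k ihk => intro w hl; exact H w fun v hv => ihk _ (hl ▸ hv) v rfl

/-! ### cyclicReduce lemmas -/

lemma cyclicReduce_nil : cyclicReduce ([] : List (Letter n)) = [] := by
  rw [cyclicReduce.eq_1]

lemma cyclicReduce_cons (a : Letter n) (rest : List (Letter n)) :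
    cyclicReduce (a :: rest) =
      if rest.getLast? = some (linv a) then cyclicReduce rest.dropLast
      else a :: rest := by
  rw [cyclicReduce.eq_2]

lemma cyclicallyReduced_cyclicReduce {w : List (Letter n)} (h : Reduced w) :
    CyclicallyReduced (cyclicReduce w) := by
  induction w using list_strong_ind with
  | _ w ih =>
    match w with
    | [] =>
      rw [cyclicReduce_nil]
      exact ⟨List.isChain_nil, by simp⟩
    | a :: rest =>
      rw [cyclicReduce_cons]
      split_ifs with hg
      · exact ih rest.dropLast (by simp [List.length_dropLast] <;> omega) (Reduced.dropLast (Reduced.tail h))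
      · refine ⟨h, ?_⟩
        intro c b hc hb
        simp only [List.head?_cons, Option.some.injEq] at hc
        subst hc
        cases rest with
        | nil =>
          simp at hb
          subst hb
          exact ne_linv _
        | cons r t =>
          have : (a :: r :: t).getLast? = (r :: t).getLast? := by
            simp [List.getLast?_cons_cons]
          rw [this] at hb
          intro hcb
          apply hg
          rw [hb]
          congr 1
          rw [hcb, linv_linv]

lemma cyclicReduce_eq_self {w : List (Letter n)} (h : CyclicallyReduced w) :
    cyclicReduce w = w := by
  match w with
  | [] => exact cyclicReduce_nil
  | a :: rest =>
    rw [cyclicReduce_cons]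
    split_ifs with hg
    · exfalso
      have hlast : (a :: rest).getLast? = some (linv a) := by
        cases rest with
        | nil => simp at hg
        | cons r t => rw [List.getLast?_cons_cons]; exact hg
      exact h.2 a (linv a) (by simp) hlast (by simp)
    · rfl

lemma isConj_mk_cyclicReduce (w : List (Letter n)) :
    IsConj (FreeGroup.mk (cyclicReduce w)) (FreeGroup.mk w) := by
  induction w using list_strong_ind with
  | _ w ih =>
    match w with
    | [] => rw [cyclicReduce_nil]
    | a :: rest =>
      rw [cyclicReduce_cons]
      split_ifs with hg
      · have hrne : rest ≠ [] := by rintro rfl; simp at hg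
        have hrest : rest = rest.dropLast ++ [linv a] := by
          conv_lhs => rw [← List.dropLast_append_getLast? _ hg]
        have hmk : FreeGroup.mk (a :: rest)
            = FreeGroup.mk [a] * FreeGroup.mk rest.dropLast * (FreeGroup.mk [a])⁻¹ := by
          rw [mk_singleton_inv, FreeGroup.mul_mk, FreeGroup.mul_mk]
          conv_lhs => rw [show (a :: rest) = [a] ++ rest from rfl, hrest]
          simp
        have h1 : IsConj (FreeGroup.mk rest.dropLast) (FreeGroup.mk (a :: rest)) := by
          rw [hmk]
          exact (isConj_iff.mpr ⟨FreeGroup.mk [a], rfl⟩)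
        exact (ih rest.dropLast (by simp [List.length_dropLast] <;> omega)).trans h1
      · exact IsConj.refl _

lemma cyclicReduce_ne_nil {w : List (Letter n)} (h : Reduced w) (hne : w ≠ []) :
    cyclicReduce w ≠ [] := by
  induction w using list_strong_ind with
  | _ w ih =>
    match w with
    | [] => exact absurd rfl hne
    | a :: rest =>
      rw [cyclicReduce_cons]
      split_ifs with hg
      · have hrne : rest ≠ [] := by rintro rfl; simp at hg
        have hdne : rest.dropLast ≠ [] := by
          intro hd
          have hrest : rest = [linv a] := by
            conv_lhs => rw [← List.dropLast_append_getLast? _ hg]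
            rw [hd]; rfl
          rw [hrest] at h
          exact (List.isChain_cons_cons.mp h).1 rfl
        exact ih rest.dropLast (by simp [List.length_dropLast] <;> omega) (Reduced.dropLast (Reduced.tail h)) hdne
      · simp

/-! ### rotation lemmas -/

lemma cyclicallyReduced_rotate_one {w : List (Letter n)} (h : CyclicallyReduced w) :
    CyclicallyReduced (w.rotate 1) := by
  match w with
  | [] => simpa using h
  | a :: t =>
    have hrot : (a :: t).rotate 1 = t ++ [a] := by
      simpa using List.rotate_cons_succ t a 0
    rw [hrot]
    obtain ⟨hred, hcyc⟩ := h
    constructor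
    · rw [Reduced, List.Chain', List.isChain_append]
      refine ⟨hred.tail, List.isChain_singleton a, ?_⟩
      intro x hx y hy
      rw [List.head?_cons, Option.mem_some_iff] at hy
      subst hy
      have hlast : (a :: t).getLast? = some x := by
        cases t with
        | nil => simp at hx
        | cons r t' => rw [List.getLast?_cons_cons]; exact Option.mem_def.mp hx
      intro hax
      exact hcyc a x rfl hlast hax
    · intro c b hc hb
      cases t with
      | nil =>
        simp only [List.nil_append, List.head?_cons, Option.some.injEq] at hc
        simp only [List.nil_append, List.getLast?_singleton, Option.some.injEq] at hb
        subst hc; subst hb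
        exact ne_linv _
      | cons r t' =>
        simp only [List.cons_append, List.head?_cons, Option.some.injEq] at hc
        subst hc
        have hb' : b = a := by
          rw [show r :: t' ++ [a] = (r :: t') ++ [a] from rfl, List.getLast?_concat] at hb
          exact (Option.some.injEq _ _ ▸ hb).symm
        subst hb'
        exact (List.isChain_cons_cons.mp hred).1

lemma cyclicallyReduced_rotate {w : List (Letter n)} (h : CyclicallyReduced w) (k : ℕ) :
    CyclicallyReduced (w.rotate k) := by
  induction k with
  | zero => simpa using h
  | succ m ihm =>
    have : w.rotate (m + 1) = (w.rotate m).rotate 1 := by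
      rw [List.rotate_rotate]
    rw [this]
    exact cyclicallyReduced_rotate_one ihm

lemma CyclicallyReduced.reduced {w : List (Letter n)} (h : CyclicallyReduced w) : Reduced w := h.1


/-! ### conjugacy implies rotation -/

lemma mk_rotate_isConj (w : List (Letter n)) (k : ℕ) :
    IsConj (FreeGroup.mk (w.rotate k)) (FreeGroup.mk w) := by
  rw [List.rotate_eq_drop_append_take_mod, ← FreeGroup.mul_mk]
  have : FreeGroup.mk w
      = FreeGroup.mk (w.take (k % w.length)) * FreeGroup.mk (w.drop (k % w.length)) := by
    rw [FreeGroup.mul_mk, List.take_append_drop]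
  rw [this]
  exact isConj_iff.mpr ⟨FreeGroup.mk (w.take (k % w.length)), by group⟩

lemma rotation_of_conj_aux :
    ∀ c : List (Letter n), Reduced c →
      ∀ v w : List (Letter n), CyclicallyReduced v → CyclicallyReduced w →
        FreeGroup.mk v = FreeGroup.mk c * FreeGroup.mk w * (FreeGroup.mk c)⁻¹ →
        ∃ k, v = w.rotate k := by
  intro c
  induction c using list_strong_ind with
  | _ c ih =>
    intro hcred v w hv hw heq
    rcases List.eq_nil_or_concat' c with rfl | ⟨c₀, a, rfl⟩
    · refine ⟨0, ?_⟩
      rw [List.rotate_zero]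
      have h1 : FreeGroup.mk ([] : List (Letter n)) = 1 := rfl
      rw [h1, one_mul, inv_one, mul_one] at heq
      rw [← Reduced.toWord_mk hv.1, ← Reduced.toWord_mk hw.1, heq]
    · rcases w with _ | ⟨b, t⟩
      · refine ⟨0, ?_⟩
        have hw1 : FreeGroup.mk ([] : List (Letter n)) = 1 := rfl
        rw [hw1, mul_one] at heq
        have hv1 : FreeGroup.mk v = 1 := by rw [heq]; group
        have hv0 : v = [] := by
          have h' := congrArg FreeGroup.toWord hv1
          rwa [Reduced.toWord_mk hv.1, FreeGroup.toWord_one] at h'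
        rw [hv0, List.rotate_nil]
      · have hc₀red : Reduced c₀ := List.IsChain.prefix hcred (List.prefix_append c₀ [a])
        have hc₀len : c₀.length < (c₀ ++ [a]).length := by simp
        have hsplit : FreeGroup.mk (c₀ ++ [a])
            = FreeGroup.mk c₀ * FreeGroup.mk [a] := (FreeGroup.mul_mk).symm
        have heq' : FreeGroup.mk v
            = FreeGroup.mk c₀ * (FreeGroup.mk [a] * FreeGroup.mk (b :: t) * (FreeGroup.mk [a])⁻¹)
              * (FreeGroup.mk c₀)⁻¹ := by
          rw [heq, hsplit]
          group
        by_cases h1 : b = linv a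
        · -- rotate left by one
          have hmid : FreeGroup.mk [a] * FreeGroup.mk (b :: t) * (FreeGroup.mk [a])⁻¹
              = FreeGroup.mk ((b :: t).rotate 1) := by
            have h2 : (b :: t).rotate 1 = t ++ [b] := by
              simpa using List.rotate_cons_succ t b 0
            have h3 : FreeGroup.mk (b :: t) = FreeGroup.mk [b] * FreeGroup.mk t := by
              rw [FreeGroup.mul_mk]; rfl
            have h4 : FreeGroup.mk [b] = (FreeGroup.mk [a])⁻¹ := by
              rw [h1, mk_singleton_inv]
            rw [h2, ← FreeGroup.mul_mk, h3, h4]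
            group
          rw [hmid] at heq'
          obtain ⟨k, hk⟩ := ih c₀ hc₀len hc₀red v ((b :: t).rotate 1) hv
            (cyclicallyReduced_rotate hw 1) heq'
          exact ⟨1 + k, by rw [hk, List.rotate_rotate]⟩
        · by_cases h2 : (b :: t).getLast? = some a
          · -- rotate right by one
            obtain ⟨d, hd⟩ : ∃ d, (b :: t).dropLast = d := ⟨_, rfl⟩
            have hwdec : (b :: t) = d ++ [a] := by
              rw [← hd]
              exact (List.dropLast_append_getLast? _ h2).symm
            have hrot : (b :: t).rotate ((b :: t).length - 1) = a :: d := by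
              rw [hwdec]
              have hL : (d ++ [a]).length - 1 = d.length := by simp
              rw [hL, List.rotate_eq_drop_append_take (by simp), List.drop_left,
                List.take_left]
              rfl
            have h5 : FreeGroup.mk (a :: d) = FreeGroup.mk [a] * FreeGroup.mk d := by
              rw [FreeGroup.mul_mk]; rfl
            have hmid : FreeGroup.mk [a] * FreeGroup.mk (b :: t) * (FreeGroup.mk [a])⁻¹
                = FreeGroup.mk ((b :: t).rotate ((b :: t).length - 1)) := by
              have h3 : FreeGroup.mk (b :: t) = FreeGroup.mk d * FreeGroup.mk [a] := by
                rw [FreeGroup.mul_mk, ← hwdec]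
              rw [hrot, h3, h5]
              group
            rw [hmid] at heq'
            obtain ⟨k, hk⟩ := ih c₀ hc₀len hc₀red v ((b :: t).rotate ((b :: t).length - 1)) hv
              (cyclicallyReduced_rotate hw _) heq'
            exact ⟨(b :: t).length - 1 + k, by rw [hk, List.rotate_rotate]⟩
          · -- no cancellation at either junction: contradiction
            exfalso
            obtain ⟨c, hc⟩ : ∃ c, c = c₀ ++ [a] := ⟨_, rfl⟩
            rw [← hc] at heq hcred
            have hcne : c ≠ [] := by rw [hc]; simp
            have hclast : c.getLast? = some a := by rw [hc, List.getLast?_concat]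
            have hwne : (b :: t) ≠ [] := by simp
            have hwInvne : wInv c ≠ [] := by
              rw [Ne, wInv_eq_nil_iff]
              exact hcne
            have hbig : Reduced (c ++ ((b :: t) ++ wInv c)) := by
              rw [Reduced, List.Chain', List.isChain_append]
              refine ⟨hcred, ?_, ?_⟩
              · rw [List.isChain_append]
                refine ⟨hw.1, Reduced.wInv hcred, ?_⟩
                intro x hx y hy
                rw [head?_wInv, hclast] at hy
                simp only [Option.map_some, Option.mem_some_iff] at hy
                subst hy
                intro hcontr
                apply h2
                rw [Option.mem_def.mp hx]
                congr 1
                exact (linv_inj hcontr).symm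
              · intro x hx y hy
                rw [List.head?_append_of_ne_nil _ hwne] at hy
                simp only [List.head?_cons, Option.mem_some_iff] at hy
                subst hy
                rw [hclast, Option.mem_some_iff] at hx
                subst hx
                exact h1
            have hmkbig : FreeGroup.mk v = FreeGroup.mk (c ++ ((b :: t) ++ wInv c)) := by
              rw [← FreeGroup.mul_mk, ← FreeGroup.mul_mk, mk_wInv, heq]
              group
            have hveq : v = c ++ ((b :: t) ++ wInv c) := by
              rw [← Reduced.toWord_mk hv.1, hmkbig, Reduced.toWord_mk hbig]
            obtain ⟨h₀, hh₀⟩ : ∃ h₀, c.head? = some h₀ := by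
              cases hc' : c with
              | nil => exact absurd hc' hcne
              | cons x xs => exact ⟨x, rfl⟩
            have hvhead : v.head? = some h₀ := by
              rw [hveq, List.head?_append_of_ne_nil _ hcne, hh₀]
            have hvlast : v.getLast? = some (linv h₀) := by
              rw [hveq, List.getLast?_append_of_ne_nil _ (by simp [hwInvne]),
                List.getLast?_append_of_ne_nil _ hwInvne, getLast?_wInv, hh₀]
              rfl
            exact hv.2 h₀ (linv h₀) hvhead hvlast (by simp)

lemma rotation_of_isConj {v w : List (Letter n)} (hv : CyclicallyReduced v)
    (hw : CyclicallyReduced w) (h : IsConj (FreeGroup.mk w) (FreeGroup.mk v)) :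
    ∃ k, v = w.rotate k := by
  obtain ⟨c, hc⟩ := isConj_iff.mp h
  refine rotation_of_conj_aux c.toWord (reduced_toWord c) v w hv hw ?_
  rw [FreeGroup.mk_toWord, hc]


/-! ### occurrence counts determine the cyclic word -/

lemma singleton_prefix_iff {α : Type*} (a : α) (l : List α) :
    [a] <+: l ↔ l.head? = some a := by
  cases l with
  | nil => simp
  | cons b t =>
    constructor
    · rintro ⟨r, hr⟩
      simp only [List.cons_append, List.nil_append, List.cons.injEq] at hr
      simp [hr.1]
    · intro h
      simp only [List.head?_cons, Option.some.injEq] at h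
      subst h
      exact ⟨t, rfl⟩

lemma lpow_succ {α : Type*} (l : List α) (m : ℕ) : lpow l (m + 1) = l ++ lpow l m := rfl

lemma eq_of_prefix_lpow {α : Type*} {u l : List α} (hlen : u.length = l.length)
    (h : u <+: lpow l (u.length + 1)) : u = l := by
  rw [lpow_succ] at h
  have h2 : u = (l ++ lpow l u.length).take u.length := List.prefix_iff_eq_take.mp h
  rw [hlen, List.take_left] at h2
  exact h2

lemma sum_occ_singleton (v : List (Letter n)) (hv : v ≠ []) :
    ∑ i : Fin n, occ [(i, true)] v = v.length := by
  have h1 : ∀ i : Fin n,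
      occ [(i, true)] v = orientedOcc [(i, true)] v + orientedOcc [(i, false)] v :=
    fun i => rfl
  have h2 : ∑ i : Fin n, occ [(i, true)] v = ∑ a : Letter n, orientedOcc [a] v := by
    rw [Fintype.sum_prod_type]
    refine Finset.sum_congr rfl ?_
    intro i _
    rw [h1, Fintype.sum_bool]
  rw [h2]
  unfold orientedOcc
  have h3 : ∀ (a : Letter n),
      ((Finset.range v.length).filter
        (fun k => [a] <+: lpow (v.rotate k) ([a].length + 1))).card
      = ∑ k ∈ Finset.range v.length,
          if [a] <+: lpow (v.rotate k) ([a].length + 1) then 1 else 0 := by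
    intro a
    rw [Finset.card_filter]
  simp only [h3]
  rw [Finset.sum_comm]
  have h4 : ∀ k ∈ Finset.range v.length,
      (∑ a : Letter n, if [a] <+: lpow (v.rotate k) ([a].length + 1) then 1 else 0) = 1 := by
    intro k _
    have hne : v.rotate k ≠ [] := by
      rw [Ne, List.rotate_eq_nil_iff]
      exact hv
    obtain ⟨h₀, hh₀⟩ : ∃ h₀, (v.rotate k).head? = some h₀ := by
      cases hr : v.rotate k with
      | nil => exact absurd hr hne
      | cons x xs => exact ⟨x, rfl⟩
    have h5 : ∀ a : Letter n,
        ([a] <+: lpow (v.rotate k) ([a].length + 1)) ↔ a = h₀ := by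
      intro a
      rw [singleton_prefix_iff, lpow_succ, List.head?_append_of_ne_nil _ hne, hh₀]
      simp [eq_comm]
    simp only [h5]
    simp
  rw [Finset.sum_congr rfl h4]
  simp

lemma orientedOcc_self_pos {v : List (Letter n)} (hv : v ≠ []) : 0 < orientedOcc v v := by
  rw [orientedOcc, Finset.card_pos]
  refine ⟨0, Finset.mem_filter.mpr ⟨Finset.mem_range.mpr (List.length_pos_iff.mpr hv), ?_⟩⟩
  rw [List.rotate_zero, lpow_succ]
  exact List.prefix_append _ _

lemma sameCyclicWord_of_occ_eq {v w : List (Letter n)} (hv : CyclicallyReduced v)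
    (hw : CyclicallyReduced w) (hv0 : v ≠ []) (hw0 : w ≠ [])
    (h : ∀ u : List (Letter n), u ≠ [] → Reduced u → occ u v = occ u w) :
    SameCyclicWord v w := by
  have hlen : v.length = w.length := by
    rw [← sum_occ_singleton v hv0, ← sum_occ_singleton w hw0]
    exact Finset.sum_congr rfl fun i _ => h _ (by simp) (List.isChain_singleton _)
  have h1 : 0 < occ v w := by
    rw [← h v hv0 hv.1]
    calc 0 < orientedOcc v v := orientedOcc_self_pos hv0
    _ ≤ occ v v := Nat.le_add_right _ _
  rw [occ] at h1
  have h2 : 0 < orientedOcc v w ∨ 0 < orientedOcc (wInv v) w := by omega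
  rcases h2 with h2 | h2
  · left
    rw [orientedOcc, Finset.card_pos] at h2
    obtain ⟨k, hk⟩ := h2.exists_mem
    rw [Finset.mem_filter] at hk
    have hveq : v = w.rotate k :=
      eq_of_prefix_lpow (by rw [hlen, List.length_rotate]) hk.2
    exact ⟨_, List.rotate_eq_iff.mp hveq.symm⟩
  · right
    rw [orientedOcc, Finset.card_pos] at h2
    obtain ⟨k, hk⟩ := h2.exists_mem
    rw [Finset.mem_filter] at hk
    have hveq : wInv v = w.rotate k :=
      eq_of_prefix_lpow (by rw [length_wInv, hlen, List.length_rotate]) hk.2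
    exact ⟨_, List.rotate_eq_iff.mp hveq.symm⟩


/-! ### the key combinatorial lemma -/

def zsgn (b : Bool) : ℤ := cond b 1 (-1)

lemma mkL_zpow (x : Fin n) (b : Bool) :
    FreeGroup.mk [(x, b)] = (FreeGroup.of x) ^ (zsgn b) := by
  cases b with
  | true => rw [zsgn, cond_true, zpow_one]; rfl
  | false =>
    rw [zsgn, cond_false, zpow_neg_one]
    have : FreeGroup.of x = FreeGroup.mk [(x, true)] := rfl
    rw [this, mk_singleton_inv]
    rfl

lemma comm_single (x : Fin n) (b c : Bool) :
    Commute (FreeGroup.mk [(x, b)]) (FreeGroup.mk [(x, c)]) := by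
  rw [mkL_zpow, mkL_zpow]
  exact (Commute.refl (FreeGroup.of x)).zpow_zpow _ _

lemma conj_single_eq {x : Fin n} {b c : Bool} :
    FreeGroup.mk [(x, b)] * FreeGroup.mk [(x, c)] * (FreeGroup.mk [(x, b)])⁻¹
      = FreeGroup.mk [(x, c)] := by
  rw [(comm_single x b c).eq, mul_inv_cancel_right]

lemma cycRed_pair {i j : Fin n} (hij : i ≠ j) (e f : Bool) :
    CyclicallyReduced [(i, e), (j, f)] := by
  constructor
  · refine List.isChain_cons_cons.mpr ⟨?_, List.isChain_singleton _⟩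
    intro hcon
    exact hij (congrArg Prod.fst hcon).symm
  · intro c b hc hb
    simp only [List.head?_cons, Option.some.injEq] at hc
    have hb' : b = (j, f) := by
      have : ([(i, e), (j, f)] : List (Letter n)).getLast? = some (j, f) := rfl
      rw [this, Option.some.injEq] at hb
      exact hb.symm
    subst hc; subst hb'
    intro hcon
    exact hij (congrArg Prod.fst hcon)

lemma wInv_pair (i j : Fin n) :
    wInv [(i, true), (j, true)] = [(j, false), (i, false)] := rfl

/-- The key lemma: if `x_i^e · u x_j^f u⁻¹` is conjugate to `(x_i x_j)^{±1}` then
`e = f` and `u ∈ ⟨x_i⟩⟨x_j⟩`. -/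
lemma KL_aux {i j : Fin n} (hij : i ≠ j) :
    ∀ N : ℕ, ∀ (e f : Bool) (u : FreeGroup (Fin n)), u.toWord.length ≤ N →
    (IsConj (FreeGroup.mk [(i, e)] * u * FreeGroup.mk [(j, f)] * u⁻¹)
        (FreeGroup.mk [(i, true), (j, true)])
      ∨ IsConj (FreeGroup.mk [(i, e)] * u * FreeGroup.mk [(j, f)] * u⁻¹)
        (FreeGroup.mk [(i, true), (j, true)])⁻¹) →
    e = f ∧ ∃ p q : ℤ, u = (FreeGroup.of i) ^ p * (FreeGroup.of j) ^ q := by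
  have base : ∀ (e f : Bool) (u : FreeGroup (Fin n)), u = 1 →
      (IsConj (FreeGroup.mk [(i, e)] * u * FreeGroup.mk [(j, f)] * u⁻¹)
          (FreeGroup.mk [(i, true), (j, true)])
        ∨ IsConj (FreeGroup.mk [(i, e)] * u * FreeGroup.mk [(j, f)] * u⁻¹)
          (FreeGroup.mk [(i, true), (j, true)])⁻¹) →
      e = f ∧ ∃ p q : ℤ, u = (FreeGroup.of i) ^ p * (FreeGroup.of j) ^ q := by
    intro e f u hu h
    subst hu
    have hVe : FreeGroup.mk [(i, e)] * 1 * FreeGroup.mk [(j, f)] * (1 : FreeGroup (Fin n))⁻¹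
        = FreeGroup.mk [(i, e), (j, f)] := by
      rw [mul_one, inv_one, mul_one, FreeGroup.mul_mk]
      rfl
    rw [hVe] at h
    have hVred : CyclicallyReduced [(i, e), (j, f)] := cycRed_pair hij e f
    have hef : e = f := by
      have hlenV : ([(i, e), (j, f)] : List (Letter n)).length = 2 := rfl
      have hrot1 : ([(i, e), (j, f)] : List (Letter n)).rotate 1 = [(j, f), (i, e)] := by
        simpa using List.rotate_cons_succ [(j, f)] (i, e) 0
      rcases h with h | h
      · obtain ⟨k, hk⟩ := rotation_of_isConj (cycRed_pair hij true true) hVred h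
        have hk2 : [((i : Fin n), true), (j, true)] = ([(i, e), (j, f)]).rotate (k % 2) := by
          rw [← hlenV, List.rotate_mod]; exact hk
        have hor : k % 2 = 0 ∨ k % 2 = 1 := by omega
        rcases hor with h2 | h2
        · rw [h2, List.rotate_zero] at hk2
          simp only [List.cons.injEq, Prod.mk.injEq] at hk2
          rcases hk2 with ⟨⟨-, he⟩, ⟨-, hf⟩, -⟩
          rw [← he, ← hf]
        · exfalso
          rw [h2, hrot1] at hk2
          simp only [List.cons.injEq, Prod.mk.injEq] at hk2
          exact hij hk2.1.1
      · rw [← mk_wInv, wInv_pair] at h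
        obtain ⟨k, hk⟩ := rotation_of_isConj (cycRed_pair hij.symm false false) hVred h
        have hk2 : [((j : Fin n), false), (i, false)] = ([(i, e), (j, f)]).rotate (k % 2) := by
          rw [← hlenV, List.rotate_mod]; exact hk
        have hor : k % 2 = 0 ∨ k % 2 = 1 := by omega
        rcases hor with h2 | h2
        · exfalso
          rw [h2, List.rotate_zero] at hk2
          simp only [List.cons.injEq, Prod.mk.injEq] at hk2
          exact hij hk2.1.1.symm
        · rw [h2, hrot1] at hk2
          simp only [List.cons.injEq, Prod.mk.injEq] at hk2
          rcases hk2 with ⟨⟨-, hf⟩, ⟨-, he⟩, -⟩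
          rw [← he, ← hf]
    exact ⟨hef, 0, 0, by simp⟩
  intro N
  induction N with
  | zero =>
    intro e f u hlen h
    have hu : u = 1 := by
      rw [← FreeGroup.toWord_eq_nil_iff]
      exact List.length_eq_zero_iff.mp (Nat.le_zero.mp hlen)
    exact base e f u hu h
  | succ N ihN =>
    intro e f u hlen h
    rcases hword : u.toWord with _ | ⟨a, t⟩
    · exact base e f u (FreeGroup.toWord_eq_nil_iff.mp hword) h
    · have hlen' : t.length + 1 ≤ N + 1 := by
        rw [hword] at hlen
        simpa using hlen
      have hured : Reduced (a :: t) := hword ▸ reduced_toWord u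
      have humk : u = FreeGroup.mk (a :: t) := by
        rw [← hword, FreeGroup.mk_toWord]
      rcases List.eq_nil_or_concat' (a :: t) with habs | ⟨d, z, hdz⟩
      · exact absurd habs (by simp)
      · by_cases hz1 : z.1 = j
        · -- strip a trailing x_j-letter
          have hzz : z = (j, z.2) := by rw [← hz1]
          set u' : FreeGroup (Fin n) := FreeGroup.mk d with hu'
          have hdred : Reduced d := by
            rw [hdz] at hured
            exact List.IsChain.prefix hured (List.prefix_append d [z])
          have hu'word : u'.toWord = d := Reduced.toWord_mk hdred
          have hu'len : u'.toWord.length ≤ N := by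
            rw [hu'word]
            have hd := congrArg List.length hdz
            simp only [List.length_cons, List.length_append, List.length_nil] at hd
            omega
          have husplit : u = u' * FreeGroup.mk [z] := by
            rw [humk, hdz, hu', FreeGroup.mul_mk]
          have hconj : FreeGroup.mk [(i, e)] * u * FreeGroup.mk [(j, f)] * u⁻¹
              = FreeGroup.mk [(i, e)] * u' * FreeGroup.mk [(j, f)] * u'⁻¹ := by
            rw [husplit]
            have : FreeGroup.mk [z] * FreeGroup.mk [(j, f)] * (FreeGroup.mk [z])⁻¹
                = FreeGroup.mk [(j, f)] := by
              rw [hzz]; exact conj_single_eq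
            calc FreeGroup.mk [(i, e)] * (u' * FreeGroup.mk [z]) * FreeGroup.mk [(j, f)]
                  * (u' * FreeGroup.mk [z])⁻¹
                = FreeGroup.mk [(i, e)] * u'
                  * (FreeGroup.mk [z] * FreeGroup.mk [(j, f)] * (FreeGroup.mk [z])⁻¹)
                  * u'⁻¹ := by group
              _ = FreeGroup.mk [(i, e)] * u' * FreeGroup.mk [(j, f)] * u'⁻¹ := by
                  rw [this]
          rw [hconj] at h
          obtain ⟨hef, p, q, hpq⟩ := ihN e f u' hu'len h
          refine ⟨hef, p, q + zsgn z.2, ?_⟩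
          rw [husplit, hpq, hzz, mkL_zpow, zpow_add, mul_assoc]
        · by_cases ha1 : a.1 = i
          · -- strip a leading x_i-letter
            have haa : a = (i, a.2) := by rw [← ha1]
            set u'' : FreeGroup (Fin n) := FreeGroup.mk t with hu''
            have htred : Reduced t := Reduced.tail hured
            have hu''word : u''.toWord = t := Reduced.toWord_mk htred
            have hu''len : u''.toWord.length ≤ N := by
              rw [hu''word]
              omega
            have husplit : u = FreeGroup.mk [a] * u'' := by
              rw [humk, hu'']
              rw [FreeGroup.mul_mk]
              rfl
            have hconj : FreeGroup.mk [(i, e)] * u * FreeGroup.mk [(j, f)] * u⁻¹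
                = FreeGroup.mk [a]
                  * (FreeGroup.mk [(i, e)] * u'' * FreeGroup.mk [(j, f)] * u''⁻¹)
                  * (FreeGroup.mk [a])⁻¹ := by
              rw [husplit]
              have hcomm : FreeGroup.mk [(i, e)] * FreeGroup.mk [a]
                  = FreeGroup.mk [a] * FreeGroup.mk [(i, e)] := by
                conv_lhs => rw [haa]
                conv_rhs => rw [haa]
                exact ((comm_single i a.2 e).symm).eq
              calc FreeGroup.mk [(i, e)] * (FreeGroup.mk [a] * u'') * FreeGroup.mk [(j, f)]
                    * (FreeGroup.mk [a] * u'')⁻¹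
                  = (FreeGroup.mk [(i, e)] * FreeGroup.mk [a])
                    * (u'' * FreeGroup.mk [(j, f)] * u''⁻¹) * (FreeGroup.mk [a])⁻¹ := by group
                _ = (FreeGroup.mk [a] * FreeGroup.mk [(i, e)])
                    * (u'' * FreeGroup.mk [(j, f)] * u''⁻¹) * (FreeGroup.mk [a])⁻¹ := by
                    rw [hcomm]
                _ = FreeGroup.mk [a]
                    * (FreeGroup.mk [(i, e)] * u'' * FreeGroup.mk [(j, f)] * u''⁻¹)
                    * (FreeGroup.mk [a])⁻¹ := by group
            have h' : (IsConj (FreeGroup.mk [(i, e)] * u'' * FreeGroup.mk [(j, f)] * u''⁻¹)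
                (FreeGroup.mk [(i, true), (j, true)])
              ∨ IsConj (FreeGroup.mk [(i, e)] * u'' * FreeGroup.mk [(j, f)] * u''⁻¹)
                (FreeGroup.mk [(i, true), (j, true)])⁻¹) := by
              have hic : IsConj (FreeGroup.mk [(i, e)] * u'' * FreeGroup.mk [(j, f)] * u''⁻¹)
                  (FreeGroup.mk [(i, e)] * u * FreeGroup.mk [(j, f)] * u⁻¹) := by
                rw [hconj]
                exact isConj_iff.mpr ⟨FreeGroup.mk [a], rfl⟩
              rcases h with h | h
              · exact Or.inl (hic.trans h)
              · exact Or.inr (hic.trans h)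
            obtain ⟨hef, p, q, hpq⟩ := ihN e f u'' hu''len h'
            refine ⟨hef, zsgn a.2 + p, q, ?_⟩
            rw [husplit, hpq, haa, mkL_zpow, zpow_add]
            group
          · -- no cancellation: contradiction by length
            exfalso
            have hlastword : (a :: t).getLast? = some z := by rw [hdz, List.getLast?_concat]
            set W : List (Letter n) :=
              ((i, e) :: (a :: t)) ++ ((j, f) :: wInv (a :: t)) with hW
            have hmkW : FreeGroup.mk W
                = FreeGroup.mk [(i, e)] * u * FreeGroup.mk [(j, f)] * u⁻¹ := by
              rw [hW, ← FreeGroup.mul_mk]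
              have e1 : FreeGroup.mk ((i, e) :: (a :: t))
                  = FreeGroup.mk [(i, e)] * u := by
                rw [humk, FreeGroup.mul_mk]; rfl
              have e2 : FreeGroup.mk ((j, f) :: wInv (a :: t))
                  = FreeGroup.mk [(j, f)] * u⁻¹ := by
                rw [humk, ← mk_wInv, FreeGroup.mul_mk]; rfl
              rw [e1, e2]
              group
            have hWred : Reduced W := by
              rw [hW, Reduced, List.Chain', List.isChain_append]
              refine ⟨?_, ?_, ?_⟩
              · refine List.isChain_cons_cons.mpr ⟨?_, hured⟩
                intro hcon
                exact ha1 (congrArg Prod.fst hcon)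
              · refine List.isChain_cons.mpr ⟨?_, ?_⟩
                · intro x hx
                  rw [head?_wInv, hlastword] at hx
                  simp only [Option.map_some, Option.mem_some_iff] at hx
                  subst hx
                  intro hcon
                  apply hz1
                  have := congrArg Prod.fst hcon
                  simpa [linv] using this
                · exact Reduced.wInv hured
              · intro x hx y hy
                simp only [List.head?_cons, Option.mem_some_iff] at hy
                subst hy
                have hx' : x = z := by
                  have : ((i, e) :: (a :: t)).getLast? = some z := by
                    rw [List.getLast?_cons_cons, hlastword]
                  rw [Option.mem_def, this, Option.some.injEq] at hx
                  exact hx.symm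
                subst hx'
                intro hcon
                exact hz1 (congrArg Prod.fst hcon).symm
            have hWcyc : CyclicallyReduced W := by
              refine ⟨hWred, ?_⟩
              intro c b hc hb
              have hc' : c = (i, e) := by
                rw [hW] at hc
                simp only [List.cons_append, List.head?_cons, Option.some.injEq] at hc
                exact hc.symm
              have hwInvne : wInv (a :: t) ≠ [] := by simp
              have hb' : b = linv a := by
                rw [hW] at hb
                rw [List.getLast?_append_of_ne_nil _ (by simp),
                  show ((j, f) :: wInv (a :: t)) = [(j, f)] ++ wInv (a :: t) from rfl,
                  List.getLast?_append_of_ne_nil _ hwInvne, getLast?_wInv] at hb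
                simp only [List.head?_cons, Option.map_some, Option.some.injEq] at hb
                exact hb.symm
              subst hc'; subst hb'
              rw [linv_linv]
              intro hcon
              exact ha1 (congrArg Prod.fst hcon).symm
            have hlenW : W.length = 2 * t.length + 4 := by
              rw [hW]
              simp only [List.length_append, List.length_cons, length_wInv]
              omega
            rcases h with h | h
            · rw [← hmkW] at h
              obtain ⟨k, hk⟩ := rotation_of_isConj (cycRed_pair hij true true) hWcyc h
              have := congrArg List.length hk
              rw [List.length_rotate, hlenW] at this
              simp only [List.length_cons, List.length_nil] at this
              omega
            · rw [← hmkW, ← mk_wInv, wInv_pair] at h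
              obtain ⟨k, hk⟩ := rotation_of_isConj (cycRed_pair hij.symm false false) hWcyc h
              have := congrArg List.length hk
              rw [List.length_rotate, hlenW] at this
              simp only [List.length_cons, List.length_nil] at this
              omega

lemma KL {i j : Fin n} (hij : i ≠ j) (e f : Bool) (u : FreeGroup (Fin n))
    (h : IsConj (FreeGroup.mk [(i, e)] * u * FreeGroup.mk [(j, f)] * u⁻¹)
        (FreeGroup.mk [(i, true), (j, true)])
      ∨ IsConj (FreeGroup.mk [(i, e)] * u * FreeGroup.mk [(j, f)] * u⁻¹)
        (FreeGroup.mk [(i, true), (j, true)])⁻¹) :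
    e = f ∧ ∃ p q : ℤ, u = (FreeGroup.of i) ^ p * (FreeGroup.of j) ^ q :=
  KL_aux hij u.toWord.length e f u le_rfl h


/-! ### main group-theoretic argument -/

lemma mk_red_ne_one {w : List (Letter n)} (h : Reduced w) (hne : w ≠ []) :
    FreeGroup.mk w ≠ 1 := by
  intro hcon
  have := congrArg FreeGroup.toWord hcon
  rw [Reduced.toWord_mk h, FreeGroup.toWord_one] at this
  exact hne this

lemma power_eq_zero {i j k : Fin n} (hj : j ≠ i) (hk : k ≠ i) {Δ p q : ℤ}
    (h : (FreeGroup.of i) ^ Δ = (FreeGroup.of j) ^ p * (FreeGroup.of k) ^ q) : Δ = 0 := by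
  have happ := congrArg
    (FreeGroup.lift (fun x => Multiplicative.ofAdd (if x = i then (1 : ℤ) else 0))) h
  simp only [_root_.map_zpow, _root_.map_mul, FreeGroup.lift_apply_of, if_pos, if_neg hj, if_neg hk] at happ
  have h2 := congrArg Multiplicative.toAdd happ
  simpa using h2

lemma cyclicallyReduced_wInv {w : List (Letter n)} (h : CyclicallyReduced w) :
    CyclicallyReduced (wInv w) := by
  refine ⟨Reduced.wInv h.1, ?_⟩
  intro a b ha hb
  rw [head?_wInv] at ha
  rw [getLast?_wInv] at hb
  obtain ⟨x, hx, hax⟩ := Option.map_eq_some_iff.mp ha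
  obtain ⟨y, hy, hby⟩ := Option.map_eq_some_iff.mp hb
  subst hax; subst hby
  rw [linv_linv]
  intro hcon
  exact h.2 y x hy hx (by rw [← hcon])

lemma main2 (hn : 2 ≤ n) (α : FreeGroup (Fin n) →* FreeGroup (Fin n))
    (H : ∀ g : FreeGroup (Fin n), g ≠ 1 → IsConj (α g) g ∨ IsConj (α g) g⁻¹) :
    ∃ c : FreeGroup (Fin n), ∀ g : FreeGroup (Fin n), α g = c * g * c⁻¹ := by
  set i₀ : Fin n := ⟨0, by omega⟩ with hi₀
  set j₀ : Fin n := ⟨1, by omega⟩ with hj₀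
  have hij₀ : i₀ ≠ j₀ := by simp [hi₀, hj₀, Fin.ext_iff]
  set X : FreeGroup (Fin n) := FreeGroup.of i₀ with hX
  -- Step 1: extract conjugating data for the first generator
  have hXmk : X = FreeGroup.mk [(i₀, true)] := rfl
  have hXne : X ≠ 1 :=
    mk_red_ne_one (List.isChain_singleton _) (by simp)
  have hstep1 : ∃ (c₀ : FreeGroup (Fin n)) (e₀ : Bool),
      α X = c₀ * FreeGroup.mk [(i₀, e₀)] * c₀⁻¹ := by
    rcases H X hXne with h | h
    · obtain ⟨c₀, hc₀⟩ := isConj_iff.mp h.symm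
      exact ⟨c₀, true, by rw [← hXmk, hc₀]⟩
    · obtain ⟨c₀, hc₀⟩ := isConj_iff.mp h.symm
      refine ⟨c₀, false, ?_⟩
      have hxinv : FreeGroup.mk [((i₀ : Fin n), false)] = X⁻¹ := by
        rw [hXmk, mk_singleton_inv]
        simp [linv]
      rw [hxinv, hc₀]
  obtain ⟨c₀, e₀, hc₀⟩ := hstep1
  set β : FreeGroup (Fin n) →* FreeGroup (Fin n) :=
    ((MulAut.conj c₀⁻¹).toMonoidHom).comp α with hβ
  have hβval : ∀ g, β g = c₀⁻¹ * α g * c₀ := by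
    intro g
    simp [hβ, MulAut.conj_apply]
  have Hβ : ∀ g : FreeGroup (Fin n), g ≠ 1 → IsConj (β g) g ∨ IsConj (β g) g⁻¹ := by
    intro g hg
    have h1 : IsConj (β g) (α g) := by
      rw [hβval]
      exact isConj_iff.mpr ⟨c₀, by group⟩
    rcases H g hg with h | h
    · exact Or.inl (h1.trans h)
    · exact Or.inr (h1.trans h)
  have hβX : β X = FreeGroup.mk [(i₀, e₀)] := by
    rw [hβval, hc₀]
    group
  -- Step 2: structure of β on the other generators
  have step4 : ∀ j : Fin n, j ≠ i₀ →
      ∃ p : ℤ, β (FreeGroup.of j) = X ^ p * FreeGroup.mk [(j, e₀)] * (X ^ p)⁻¹ := by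
    intro j hj
    have hYmk : FreeGroup.of j = FreeGroup.mk [(j, true)] := rfl
    have hYne : FreeGroup.of j ≠ 1 := mk_red_ne_one (List.isChain_singleton _) (by simp)
    have hextract : ∃ (u : FreeGroup (Fin n)) (b : Bool),
        β (FreeGroup.of j) = u * FreeGroup.mk [(j, b)] * u⁻¹ := by
      rcases Hβ (FreeGroup.of j) hYne with h | h
      · obtain ⟨u, hu⟩ := isConj_iff.mp h.symm
        exact ⟨u, true, by rw [← hYmk, hu]⟩
      · obtain ⟨u, hu⟩ := isConj_iff.mp h.symm
        refine ⟨u, false, ?_⟩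
        have hyinv : FreeGroup.mk [((j : Fin n), false)] = (FreeGroup.of j)⁻¹ := by
          rw [hYmk, mk_singleton_inv]
          simp [linv]
        rw [hyinv, hu]
    obtain ⟨u, b, hu⟩ := hextract
    have hgmk : X * FreeGroup.of j = FreeGroup.mk [(i₀, true), (j, true)] := by
      rw [hXmk, hYmk, FreeGroup.mul_mk]
      rfl
    have hgred : Reduced [((i₀ : Fin n), true), (j, true)] := by
      refine List.isChain_cons_cons.mpr ⟨?_, List.isChain_singleton _⟩
      intro hcon
      exact hj (congrArg Prod.fst hcon)
    have hgne : FreeGroup.mk [((i₀ : Fin n), true), (j, true)] ≠ 1 :=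
      mk_red_ne_one hgred (by simp)
    have hβg : FreeGroup.mk [(i₀, e₀)] * u * FreeGroup.mk [(j, b)] * u⁻¹
        = β (X * FreeGroup.of j) := by
      rw [_root_.map_mul, hβX, hu]
      group
    have hKLhyp : IsConj (FreeGroup.mk [(i₀, e₀)] * u * FreeGroup.mk [(j, b)] * u⁻¹)
        (FreeGroup.mk [(i₀, true), (j, true)])
      ∨ IsConj (FreeGroup.mk [(i₀, e₀)] * u * FreeGroup.mk [(j, b)] * u⁻¹)
        (FreeGroup.mk [(i₀, true), (j, true)])⁻¹ := by
      rw [hβg, ← hgmk]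
      exact Hβ (X * FreeGroup.of j) (by rw [hgmk]; exact hgne)
    obtain ⟨heb, p, q, hpq⟩ := KL (Ne.symm hj) e₀ b u hKLhyp
    refine ⟨p, ?_⟩
    rw [hu, hpq, ← heb]
    rw [show FreeGroup.mk [(j, e₀)] = (FreeGroup.of j) ^ (zsgn e₀) from mkL_zpow j e₀]
    rw [hX]
    group
  -- Step 3: the exponents agree
  have step5 : ∀ j k : Fin n, j ≠ i₀ → k ≠ i₀ → j ≠ k → ∀ p q : ℤ,
      β (FreeGroup.of j) = X ^ p * FreeGroup.mk [(j, e₀)] * (X ^ p)⁻¹ →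
      β (FreeGroup.of k) = X ^ q * FreeGroup.mk [(k, e₀)] * (X ^ q)⁻¹ →
      p = q := by
    intro j k hj hk hjk p q hbj hbk
    have hgmk : FreeGroup.of j * FreeGroup.of k = FreeGroup.mk [(j, true), (k, true)] := by
      rw [show FreeGroup.of j = FreeGroup.mk [(j, true)] from rfl,
        show FreeGroup.of k = FreeGroup.mk [(k, true)] from rfl, FreeGroup.mul_mk]
      rfl
    have hgred : Reduced [((j : Fin n), true), (k, true)] := by
      refine List.isChain_cons_cons.mpr ⟨?_, List.isChain_singleton _⟩
      intro hcon
      exact hjk (congrArg Prod.fst hcon).symm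
    have hgne : FreeGroup.of j * FreeGroup.of k ≠ 1 := by
      rw [hgmk]
      exact mk_red_ne_one hgred (by simp)
    set u : FreeGroup (Fin n) := X ^ (q - p) with hudef
    have hcon : FreeGroup.mk [(j, e₀)] * u * FreeGroup.mk [(k, e₀)] * u⁻¹
        = (X ^ p)⁻¹ * β (FreeGroup.of j * FreeGroup.of k) * X ^ p := by
      rw [_root_.map_mul, hbj, hbk, hudef]
      group
    have hconj2 : IsConj (FreeGroup.mk [(j, e₀)] * u * FreeGroup.mk [(k, e₀)] * u⁻¹)
        (β (FreeGroup.of j * FreeGroup.of k)) := by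
      refine isConj_iff.mpr ⟨X ^ p, ?_⟩
      rw [hcon]
      group
    have hKLhyp : IsConj (FreeGroup.mk [(j, e₀)] * u * FreeGroup.mk [(k, e₀)] * u⁻¹)
        (FreeGroup.mk [(j, true), (k, true)])
      ∨ IsConj (FreeGroup.mk [(j, e₀)] * u * FreeGroup.mk [(k, e₀)] * u⁻¹)
        (FreeGroup.mk [(j, true), (k, true)])⁻¹ := by
      rcases Hβ _ hgne with h | h
      · exact Or.inl (hconj2.trans (hgmk ▸ h))
      · exact Or.inr (hconj2.trans (hgmk ▸ h))
    obtain ⟨-, p', q', hpq⟩ := KL hjk e₀ e₀ u hKLhyp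
    have h9 : (FreeGroup.of i₀) ^ (q - p) = FreeGroup.of j ^ p' * FreeGroup.of k ^ q' := by
      rw [← hX, ← hudef]
      exact hpq
    have : q - p = 0 := power_eq_zero hj hk h9
    omega
  -- Step 4: the sign is positive
  obtain ⟨P, hP⟩ := step4 j₀ (Ne.symm hij₀)
  have hYmk : FreeGroup.of j₀ = FreeGroup.mk [(j₀, true)] := rfl
  have he₀ : e₀ = true := by
    by_contra hfalse
    have he : e₀ = false := by
      cases e₀
      · rfl
      · exact absurd rfl hfalse
    rw [he] at hβX hP
    set Y : FreeGroup (Fin n) := FreeGroup.of j₀ with hY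
    have hXinv : FreeGroup.mk [((i₀ : Fin n), false)] = X⁻¹ := by
      rw [hXmk, mk_singleton_inv]
      simp [linv]
    have hYinv : FreeGroup.mk [((j₀ : Fin n), false)] = Y⁻¹ := by
      rw [hYmk, mk_singleton_inv]
      simp [linv]
    have hbX : β X = X⁻¹ := by rw [hβX, hXinv]
    have hbY : β Y = X ^ P * Y⁻¹ * (X ^ P)⁻¹ := by rw [hP, hYinv]
    have hGfact : FreeGroup.mk
        [((i₀ : Fin n), true), (i₀, true), (j₀, true), (i₀, true), (j₀, true), (j₀, true)]
        = X * X * Y * X * Y * Y := by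
      rw [hXmk, hYmk]
      simp only [FreeGroup.mul_mk]
      rfl
    have hGred : Reduced
        [((i₀ : Fin n), true), (i₀, true), (j₀, true), (i₀, true), (j₀, true), (j₀, true)] := by
      simp [Reduced, List.Chain', List.isChain_cons_cons, List.isChain_singleton, linv, Prod.ext_iff]
    have hGcyc : CyclicallyReduced
        [((i₀ : Fin n), true), (i₀, true), (j₀, true), (i₀, true), (j₀, true), (j₀, true)] := by
      refine ⟨hGred, ?_⟩
      intro a b ha hb
      simp only [List.head?_cons, Option.some.injEq] at ha
      have hb' : b = (j₀, true) := by
        have : ([((i₀ : Fin n), true), (i₀, true), (j₀, true), (i₀, true), (j₀, true),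
            (j₀, true)]).getLast? = some (j₀, true) := rfl
        rw [this, Option.some.injEq] at hb
        exact hb.symm
      subst hb'
      rw [← ha]
      simp [linv, Prod.ext_iff]
    have hGne : FreeGroup.mk
        [((i₀ : Fin n), true), (i₀, true), (j₀, true), (i₀, true), (j₀, true), (j₀, true)]
        ≠ 1 := mk_red_ne_one hGred (by simp)
    have hVfact : FreeGroup.mk
        [((j₀ : Fin n), false), (i₀, false), (j₀, false), (j₀, false), (i₀, false), (i₀, false)]
        = Y⁻¹ * X⁻¹ * Y⁻¹ * Y⁻¹ * X⁻¹ * X⁻¹ := by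
      rw [← hXinv, ← hYinv]
      simp only [FreeGroup.mul_mk]
      rfl
    have hVred : Reduced
        [((j₀ : Fin n), false), (i₀, false), (j₀, false), (j₀, false), (i₀, false),
          (i₀, false)] := by
      simp [Reduced, List.Chain', List.isChain_cons_cons, List.isChain_singleton, linv, Prod.ext_iff]
    have hVcyc : CyclicallyReduced
        [((j₀ : Fin n), false), (i₀, false), (j₀, false), (j₀, false), (i₀, false),
          (i₀, false)] := by
      refine ⟨hVred, ?_⟩
      intro a b ha hb
      simp only [List.head?_cons, Option.some.injEq] at ha
      have hb' : b = (i₀, false) := by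
        have : ([((j₀ : Fin n), false), (i₀, false), (j₀, false), (j₀, false), (i₀, false),
            (i₀, false)]).getLast? = some (i₀, false) := rfl
        rw [this, Option.some.injEq] at hb
        exact hb.symm
      subst hb'
      rw [← ha]
      simp [linv, Prod.ext_iff]
    have hβG : β (FreeGroup.mk
        [((i₀ : Fin n), true), (i₀, true), (j₀, true), (i₀, true), (j₀, true), (j₀, true)])
        = X ^ (P - 2) * FreeGroup.mk
            [((j₀ : Fin n), false), (i₀, false), (j₀, false), (j₀, false), (i₀, false),
              (i₀, false)] * (X ^ (P - 2))⁻¹ := by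
      rw [hGfact, hVfact]
      simp only [_root_.map_mul]
      rw [hbX, hbY]
      group
    have hconjV : IsConj (FreeGroup.mk
        [((j₀ : Fin n), false), (i₀, false), (j₀, false), (j₀, false), (i₀, false),
          (i₀, false)])
        (β (FreeGroup.mk
          [((i₀ : Fin n), true), (i₀, true), (j₀, true), (i₀, true), (j₀, true),
            (j₀, true)])) := by
      refine isConj_iff.mpr ⟨X ^ (P - 2), ?_⟩
      rw [hβG]
    rcases Hβ _ hGne with hcase | hcase
    · have hVG := hconjV.trans hcase
      obtain ⟨k, hk⟩ := rotation_of_isConj hGcyc hVcyc hVG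
      have hmem : ((i₀ : Fin n), true) ∈
          [((i₀ : Fin n), true), (i₀, true), (j₀, true), (i₀, true), (j₀, true),
            (j₀, true)] := by simp
      rw [hk, List.mem_rotate] at hmem
      simp [Prod.ext_iff] at hmem
    · have hGinv : (FreeGroup.mk
          [((i₀ : Fin n), true), (i₀, true), (j₀, true), (i₀, true), (j₀, true),
            (j₀, true)])⁻¹
          = FreeGroup.mk
            [((j₀ : Fin n), false), (j₀, false), (i₀, false), (j₀, false), (i₀, false),
              (i₀, false)] := by
        rw [← mk_wInv]
        rfl
      rw [hGinv] at hcase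
      have hVG := hconjV.trans hcase
      have hwGcyc : CyclicallyReduced
          [((j₀ : Fin n), false), (j₀, false), (i₀, false), (j₀, false), (i₀, false),
            (i₀, false)] := by
        have := cyclicallyReduced_wInv hGcyc
        exact this
      obtain ⟨k, hk⟩ := rotation_of_isConj hwGcyc hVcyc hVG
      have hlenV : ([((j₀ : Fin n), false), (i₀, false), (j₀, false), (j₀, false), (i₀, false),
          (i₀, false)]).length = 6 := rfl
      have hk6 : [((j₀ : Fin n), false), (j₀, false), (i₀, false), (j₀, false), (i₀, false),
          (i₀, false)]
          = ([((j₀ : Fin n), false), (i₀, false), (j₀, false), (j₀, false), (i₀, false),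
            (i₀, false)]).rotate (k % 6) := by
        rw [← hlenV, List.rotate_mod]
        exact hk
      have hor : k % 6 = 0 ∨ k % 6 = 1 ∨ k % 6 = 2 ∨ k % 6 = 3 ∨ k % 6 = 4 ∨ k % 6 = 5 := by
        omega
      rcases hor with h2 | h2 | h2 | h2 | h2 | h2 <;>
        (rw [h2] at hk6
         rw [List.rotate_eq_drop_append_take (by norm_num)] at hk6
         simp [Prod.ext_iff, hij₀, Ne.symm hij₀] at hk6)
  subst he₀
  -- Step 5: conclusion
  have hp_all : ∀ a : Fin n, a ≠ i₀ →
      β (FreeGroup.of a) = X ^ P * FreeGroup.of a * (X ^ P)⁻¹ := by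
    intro a ha
    rcases eq_or_ne a j₀ with rfl | haj
    · rw [hP]
      rfl
    · obtain ⟨p, hp⟩ := step4 a ha
      have hpP := step5 a j₀ ha (Ne.symm hij₀) haj p P hp hP
      rw [hp, hpP]
      rfl
  refine ⟨c₀ * X ^ P, ?_⟩
  have hhom : β = ((MulAut.conj (X ^ P)).toMonoidHom : FreeGroup (Fin n) →* FreeGroup (Fin n)) := by
    refine FreeGroup.ext_hom _ _ ?_
    intro a
    by_cases ha : a = i₀
    · subst ha
      rw [← hX]
      have : β X = X := by rw [hβX, ← hXmk]
      rw [this]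
      simp only [MulEquiv.coe_toMonoidHom, MulAut.conj_apply]
      group
    · rw [hp_all a ha]
      simp only [MulEquiv.coe_toMonoidHom, MulAut.conj_apply]
  intro g
  have hβg := DFunLike.congr_fun hhom g
  simp only [MulEquiv.coe_toMonoidHom, MulAut.conj_apply] at hβg
  have : α g = c₀ * β g * c₀⁻¹ := by
    rw [hβval]
    group
  rw [this, hβg]
  group

lemma isConj_inv {G : Type*} [Group G] {a b : G} (h : IsConj a b) : IsConj a⁻¹ b⁻¹ := by
  obtain ⟨c, hc⟩ := isConj_iff.mp h
  exact isConj_iff.mpr ⟨c, by rw [← hc]; group⟩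

lemma isConj_map {G H : Type*} [Group G] [Group H] (f : G →* H) {a b : G}
    (h : IsConj a b) : IsConj (f a) (f b) := by
  obtain ⟨c, hc⟩ := isConj_iff.mp h
  exact isConj_iff.mpr ⟨f c, by rw [← _root_.map_inv, ← _root_.map_mul, ← _root_.map_mul, hc]⟩

end Faithful

open Faithful in
/-- If two automorphisms of `F_n` define the same subword-count data
on all cyclic words, then they differ by an inner automorphism: the representation of
`Out(F_n)` is faithful. -/
theorem faithfulness (n : ℕ) (hn : 2 ≤ n)
    (φ ψ : FreeGroup (Fin n) ≃* FreeGroup (Fin n))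
    (h : ∀ g : FreeGroup (Fin n), g ≠ 1 →
      ∀ u : List (Letter n), u ≠ [] → Reduced u →
        occ u (cyclicReduce (FreeGroup.toWord (φ g))) =
        occ u (cyclicReduce (FreeGroup.toWord (ψ g)))) :
    ∃ c : FreeGroup (Fin n), ∀ g : FreeGroup (Fin n), ψ.symm (φ g) = c * g * c⁻¹ := by
  set α : FreeGroup (Fin n) →* FreeGroup (Fin n) :=
    (ψ.symm.toMonoidHom).comp φ.toMonoidHom with hα
  have hαval : ∀ g, α g = ψ.symm (φ g) := fun g => rfl
  have H : ∀ g : FreeGroup (Fin n), g ≠ 1 → IsConj (α g) g ∨ IsConj (α g) g⁻¹ := by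
    intro g hg
    have hφg : φ g ≠ 1 := fun hh => hg (by
      have := congrArg φ.symm hh
      simpa using this)
    have hψg : ψ g ≠ 1 := fun hh => hg (by
      have := congrArg ψ.symm hh
      simpa using this)
    set v := cyclicReduce ((φ g).toWord) with hv
    set w := cyclicReduce ((ψ g).toWord) with hw
    have hvred : CyclicallyReduced v := cyclicallyReduced_cyclicReduce (reduced_toWord _)
    have hwred : CyclicallyReduced w := cyclicallyReduced_cyclicReduce (reduced_toWord _)
    have hv0 : v ≠ [] := cyclicReduce_ne_nil (reduced_toWord _) (by
      rw [Ne, FreeGroup.toWord_eq_nil_iff]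
      exact hφg)
    have hw0 : w ≠ [] := cyclicReduce_ne_nil (reduced_toWord _) (by
      rw [Ne, FreeGroup.toWord_eq_nil_iff]
      exact hψg)
    have hs : SameCyclicWord v w :=
      sameCyclicWord_of_occ_eq hvred hwred hv0 hw0 (fun u h1 h2 => h g hg u h1 h2)
    have hconjv : IsConj (FreeGroup.mk v) (φ g) := by
      have h1 := isConj_mk_cyclicReduce ((φ g).toWord)
      rwa [FreeGroup.mk_toWord] at h1
    have hconjw : IsConj (FreeGroup.mk w) (ψ g) := by
      have h1 := isConj_mk_cyclicReduce ((ψ g).toWord)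
      rwa [FreeGroup.mk_toWord] at h1
    rcases hs with ⟨i, hi⟩ | ⟨i, hi⟩
    · left
      have hrot : IsConj (FreeGroup.mk w) (FreeGroup.mk v) := by
        rw [hi]
        exact mk_rotate_isConj v i
      have hfg : IsConj (φ g) (ψ g) := (hconjv.symm).trans (hrot.symm.trans hconjw)
      have h2 := isConj_map ψ.symm.toMonoidHom hfg
      have h3 : (ψ.symm.toMonoidHom) (ψ g) = g := ψ.symm_apply_apply g
      rw [h3] at h2
      exact h2
    · right
      have hrot : IsConj (FreeGroup.mk w) (FreeGroup.mk (wInv v)) := by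
        rw [hi]
        exact mk_rotate_isConj (wInv v) i
      have hinv : FreeGroup.mk (wInv v) = (FreeGroup.mk v)⁻¹ := mk_wInv v
      have hfg : IsConj (φ g) ((ψ g)⁻¹) := by
        have h1 : IsConj (FreeGroup.mk w) ((φ g)⁻¹) := by
          rw [hinv] at hrot
          exact hrot.trans (isConj_inv hconjv)
        have h4 := isConj_inv (hconjw.symm.trans h1)
        rw [inv_inv] at h4
        exact h4.symm
      have h2 := isConj_map ψ.symm.toMonoidHom hfg
      have h3 : (ψ.symm.toMonoidHom) ((ψ g)⁻¹) = g⁻¹ := by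
        rw [map_inv]
        rw [show (ψ.symm.toMonoidHom) (ψ g) = g from ψ.symm_apply_apply g]
      rw [h3] at h2
      exact h2
  obtain ⟨c, hc⟩ := main2 hn α H
  exact ⟨c, fun g => by rw [← hαval g]; exact hc g⟩
end

section
/- (Gluing Lemma) Let t be a nonempty reduced word and let w₀, v₀ be nonempty reduced words such that the concatenations w = w₀t, v = tv₀ and s = w₀tv₀ are reduced (no cancellation at the junctions). Then for every reduced word u with 1 ≤ |u| ≤ |t| + 1 one has occf(u, s) = occf(u, w) + occf(u, v) − occf(u, t). -/
open List

private lemma prefix_drop_append_iff' {α : Type*} (u l c : List α) (i : ℕ)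
    (h : i + u.length ≤ l.length) :
    u <+: (l ++ c).drop i ↔ u <+: l.drop i := by
  rw [List.drop_append_of_le_length (by omega)]
  constructor
  · intro hp
    have hq := List.prefix_iff_eq_take.mp hp
    rw [List.take_append_of_le_length (by simp [List.length_drop]; omega)] at hq
    rw [List.prefix_iff_eq_take]
    exact hq
  · intro hp
    exact hp.trans (List.prefix_append _ _)

private lemma haddinj (A : ℕ) : Function.Injective (· + A) := fun x y h => Nat.add_right_cancel h

private lemma factOcc_glue_aux {α : Type*} [DecidableEq α] (u a b c : List α)
    (h1 : 1 ≤ u.length) (h2 : u.length ≤ b.length + 1) :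
    ((Finset.range ((a++b++c).length + 1)).filter (fun i => u <+: (a++b++c).drop i)).card
      + ((Finset.range (b.length + 1)).filter (fun i => u <+: b.drop i)).card
    = ((Finset.range ((a++b).length + 1)).filter (fun i => u <+: (a++b).drop i)).card
      + ((Finset.range ((b++c).length + 1)).filter (fun i => u <+: (b++c).drop i)).card := by
  classical
  set A := a.length with hA
  set B := b.length with hB
  set C := c.length with hC
  set s := a ++ b ++ c with hsdef
  have hs : s.length = A + B + C := by simp [hsdef]; omega
  have hdropAB : ∀ j, s.drop (j + A) = (b++c).drop j := by
    intro j
    rw [hsdef, List.append_assoc, Nat.add_comm, hA, List.drop_append]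
    simp
  set S1 : Finset ℕ := (Finset.range (s.length + 1)).filter
    (fun i => u <+: s.drop i ∧ i + u.length ≤ A + B) with hS1
  set S2 : Finset ℕ := (Finset.range (s.length + 1)).filter
    (fun i => u <+: s.drop i ∧ A ≤ i) with hS2
  have hunion : S1 ∪ S2 = (Finset.range (s.length + 1)).filter (fun i => u <+: s.drop i) := by
    ext i
    simp only [hS1, hS2, Finset.mem_union, Finset.mem_filter, Finset.mem_range]
    constructor
    · rintro (⟨h, h', _⟩ | ⟨h, h', _⟩) <;> exact ⟨h, h'⟩
    · rintro ⟨h, h'⟩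
      rcases le_or_gt A i with hi | hi
      · exact Or.inr ⟨h, h', hi⟩
      · exact Or.inl ⟨h, h', by omega⟩
  have hS1card : S1.card = ((Finset.range ((a++b).length + 1)).filter
      (fun i => u <+: (a++b).drop i)).card := by
    congr 1
    ext i
    simp only [hS1, Finset.mem_filter, Finset.mem_range, List.length_append]
    constructor
    · rintro ⟨_, hp, hle⟩
      refine ⟨by omega, ?_⟩
      rw [← prefix_drop_append_iff' u (a++b) c i (by simp; omega)]
      exact hp
    · rintro ⟨hi, hp⟩
      have hle : i + u.length ≤ A + B := by
        have := hp.length_le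
        simp [List.length_drop] at this
        omega
      refine ⟨by omega, ?_, hle⟩
      rw [hsdef, prefix_drop_append_iff' u (a++b) c i (by simp; omega)]
      exact hp
  have hS2card : S2.card = ((Finset.range ((b++c).length + 1)).filter
      (fun i => u <+: (b++c).drop i)).card := by
    conv_rhs => rw [← Finset.card_image_of_injective _ (haddinj A)]
    congr 1
    ext i
    simp only [hS2, Finset.mem_image, Finset.mem_filter, Finset.mem_range, List.length_append]
    constructor
    · rintro ⟨hi, hp, hAi⟩
      refine ⟨i - A, ⟨by omega, ?_⟩, by omega⟩
      have hd := hdropAB (i - A)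
      rw [Nat.sub_add_cancel hAi] at hd
      rwa [hd] at hp
    · rintro ⟨j, ⟨hj, hp⟩, rfl⟩
      exact ⟨by omega, by rwa [hdropAB], by omega⟩
  have hinter : (S1 ∩ S2).card = ((Finset.range (B + 1)).filter
      (fun i => u <+: b.drop i)).card := by
    conv_rhs => rw [← Finset.card_image_of_injective _ (haddinj A)]
    congr 1
    ext i
    simp only [Finset.mem_inter, hS1, hS2, Finset.mem_image, Finset.mem_filter, Finset.mem_range]
    constructor
    · rintro ⟨⟨hi, hp, hle⟩, _, _, hAi⟩
      refine ⟨i - A, ⟨by omega, ?_⟩, by omega⟩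
      have hd := hdropAB (i - A)
      rw [Nat.sub_add_cancel hAi] at hd
      rw [hd, prefix_drop_append_iff' u b c (i - A) (by omega)] at hp
      exact hp
    · rintro ⟨j, ⟨hj, hp⟩, rfl⟩
      have hlen : j + u.length ≤ B := by
        have := hp.length_le
        simp [List.length_drop] at this
        omega
      have hp' : u <+: s.drop (j + A) := by
        rw [hdropAB, prefix_drop_append_iff' u b c j (by omega)]
        exact hp
      exact ⟨⟨by omega, hp', by omega⟩, by omega, hp', by omega⟩
  calc ((Finset.range (s.length + 1)).filter (fun i => u <+: s.drop i)).card
        + ((Finset.range (B + 1)).filter (fun i => u <+: b.drop i)).card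
      = (S1 ∪ S2).card + (S1 ∩ S2).card := by rw [hunion, hinter]
    _ = S1.card + S2.card := Finset.card_union_add_card_inter S1 S2
    _ = _ := by rw [hS1card, hS2card]

/-- Gluing Lemma. If `w = w₀ ++ t`, `v = t ++ v₀` and
`s = w₀ ++ t ++ v₀` are reduced, then for every reduced `u` with `1 ≤ |u| ≤ |t| + 1`,
`occf(u, s) = occf(u, w) + occf(u, v) - occf(u, t)`. -/
theorem gluing_lemma (n : ℕ) (t w₀ v₀ : List (Letter n))
    (ht : t ≠ []) (htr : Reduced t) (hw₀ : w₀ ≠ []) (hv₀ : v₀ ≠ [])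
    (hw : Reduced (w₀ ++ t)) (hv : Reduced (t ++ v₀)) (hs : Reduced (w₀ ++ t ++ v₀))
    (u : List (Letter n)) (hur : Reduced u) (hu1 : 1 ≤ u.length)
    (hu2 : u.length ≤ t.length + 1) :
    occf u (w₀ ++ t ++ v₀) + occf u t = occf u (w₀ ++ t) + occf u (t ++ v₀) := by
  have hlen : (wInv u).length = u.length := by simp [wInv]
  have h1 := factOcc_glue_aux u w₀ t v₀ hu1 hu2
  have h2 := factOcc_glue_aux (wInv u) w₀ t v₀ (by omega) (by omega)
  simp only [occf, factOcc] at *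
  omega
end

section
/- Let k ≥ 2, let t be a reduced word of length k−1, and let w be a reduced word of length strictly greater than k−1 having t both as a prefix and as a suffix. Let v be the prefix of w of length |w| − (k−1). Then v is cyclically reduced, and for every reduced word u of length k one has occf(u, w) = occ(u, V), where V is the cyclic word represented by v. -/
open List

lemma getElem_congr' {α : Type*} (l : List α) (i j : ℕ) (h : i = j) (hi : i < l.length) :
    l[i] = l[j]'(h ▸ hi) := by subst h; rfl

lemma lpow_length {α : Type*} (l : List α) : ∀ m, (lpow l m).length = m * l.length
  | 0 => by simp [lpow]
  | m+1 => by simp [lpow, lpow_length l m, Nat.succ_mul, Nat.add_comm]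

lemma prefix_lpow_append {α : Type*} {v w : List α} (h : w <+: v ++ w) :
    ∀ N, w <+: lpow v N ++ w
  | 0 => by simp [lpow]
  | N+1 => by
    obtain ⟨s, hs⟩ := prefix_lpow_append h N
    have he : lpow v (N+1) ++ w = (v ++ w) ++ s := by
      simp only [lpow, List.append_assoc, hs]
    rw [he]
    exact h.trans (List.prefix_append _ _)

lemma lpow_rotate {α : Type*} {v : List α} {i : ℕ} (hi : i ≤ v.length) :
    ∀ N, lpow (v.rotate i) N ++ v.drop i = (lpow v (N+1)).drop i
  | 0 => by simp [lpow]
  | N+1 => by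
    have h1 : lpow (v.rotate i) (N+1) ++ v.drop i
        = v.rotate i ++ (lpow (v.rotate i) N ++ v.drop i) := by simp [lpow]
    rw [h1, lpow_rotate hi N]
    have h2 : lpow v (N+1+1) = v ++ lpow v (N+1) := rfl
    have h3 : lpow v (N+1) = v ++ lpow v N := rfl
    rw [h2, List.drop_append_of_le_length hi, h3, List.drop_append_of_le_length hi,
      List.rotate_eq_drop_append_take hi, List.append_assoc]
    congr 1
    rw [← List.append_assoc, List.take_append_drop]

/-- If a reduced word `w` of length `> k-1` has the reduced word `t`
of length `k-1` as both a prefix and a suffix, then the prefix `v` of `w` of length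
`|w| - (k-1)` is cyclically reduced, and factor occurrences of any length-`k` reduced
word `u` in `w` agree with its occurrences in the cyclic word represented by `v`. -/
theorem selfGluing (n k : ℕ) (hk : 2 ≤ k) (t w : List (Letter n))
    (htr : Reduced t) (htl : t.length = k - 1)
    (hwr : Reduced w) (hwl : k - 1 < w.length)
    (hpre : t <+: w) (hsuf : t <:+ w) :
    CyclicallyReduced (w.take (w.length - (k - 1))) ∧
    ∀ u : List (Letter n), Reduced u → u.length = k →
      occf u w = occ u (w.take (w.length - (k - 1))) := by
  set m := w.length - (k - 1) with hm_def
  have hmpos : 0 < m := by omega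
  have hmle : m ≤ w.length := by omega
  set v := w.take m with hv_def
  have hvlen : v.length = m := by simp [hv_def]; omega
  have hwlen : w.length = m + (k - 1) := by omega
  -- w = v ++ t
  have ht_drop : w.drop m = t := by
    obtain ⟨s, hs⟩ := hsuf
    have hslen : s.length = m := by
      have h := congrArg List.length hs
      simp at h; omega
    rw [← hs, ← hslen, List.drop_left]
  have hw_eq : w = v ++ t := by
    rw [hv_def, ← ht_drop]; exact (List.take_append_drop m w).symm
  have hperiod : w <+: v ++ w := by
    obtain ⟨s, hs⟩ := hpre
    refine ⟨s, ?_⟩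
    calc w ++ s = (v ++ t) ++ s := by rw [← hw_eq]
    _ = v ++ (t ++ s) := List.append_assoc ..
    _ = v ++ w := by rw [hs]
  have hwP : ∀ N, w.length ≤ N * m → w <+: lpow v N := by
    intro N hN
    refine List.prefix_of_prefix_length_le (prefix_lpow_append hperiod N)
      (List.prefix_append _ _) ?_
    rw [lpow_length, hvlen]; omega
  -- core equivalence
  have core : ∀ i, i < m → ∀ u : List (Letter n), u.length = k →
      (u <+: w.drop i ↔ u <+: lpow (v.rotate i) (k + 1)) := by
    intro i hi u hul
    have hiv : i ≤ v.length := by omega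
    have hkm : k + 1 ≤ (k + 1) * m := by
      simpa using Nat.mul_le_mul_left (k + 1) hmpos
    have hkm2 : (k + 2) * m = m + (k + 1) * m := by ring
    have hP : w <+: lpow v (k + 2) := hwP (k + 2) (by omega)
    have hdrop : w.drop i <+: (lpow v (k + 2)).drop i := by
      obtain ⟨s, hs⟩ := hP
      refine ⟨s, ?_⟩
      rw [← hs, List.drop_append_of_le_length (by omega)]
    have hrot : lpow (v.rotate i) (k + 1) <+: (lpow v (k + 2)).drop i :=
      ⟨v.drop i, lpow_rotate hiv (k + 1)⟩
    have hlen1 : k ≤ (lpow (v.rotate i) (k + 1)).length := by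
      rw [lpow_length, List.length_rotate, hvlen]; omega
    have hlen2 : k ≤ (w.drop i).length := by
      rw [List.length_drop]; omega
    constructor
    · intro h
      exact List.prefix_of_prefix_length_le (h.trans hdrop) hrot (by omega)
    · intro h
      exact List.prefix_of_prefix_length_le (h.trans hrot) hdrop (by omega)
  have key : ∀ u : List (Letter n), u.length = k → factOcc u w = orientedOcc u v := by
    intro u hul
    unfold factOcc orientedOcc
    rw [hvlen, hul]
    congr 1
    apply Finset.ext
    intro i
    simp only [Finset.mem_filter, Finset.mem_range]
    constructor
    · rintro ⟨hi, hpref⟩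
      have hile : i < m := by
        have hle := hpref.length_le
        rw [List.length_drop] at hle
        omega
      exact ⟨hile, (core i hile u hul).mp hpref⟩
    · rintro ⟨hi, hpref⟩
      exact ⟨by omega, (core i hi u hul).mpr hpref⟩
  constructor
  · constructor
    · exact hwr.prefix (List.take_prefix m w)
    · intro a b ha hb
      have hvne : v ≠ [] := by
        intro h; rw [h] at hvlen; simp at hvlen; omega
      rw [List.head?_eq_head hvne] at ha
      rw [List.getLast?_eq_getLast hvne] at hb
      have ha' : a = v.head hvne := (Option.some.inj ha).symm
      have hb' : b = v.getLast hvne := (Option.some.inj hb).symm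
      rw [List.head_eq_getElem] at ha'
      rw [List.getLast_eq_getElem] at hb'
      have hred := List.isChain_iff_getElem.mp hwr (m - 1) (by omega)
      have hidx : m - 1 + 1 = m := by omega
      simp only [hidx] at hred
      -- hred : w[m] ≠ linv w[m-1]
      have haw : a = w[0]'(by omega) := by
        rw [ha']; exact List.getElem_take
      have htne : 0 < t.length := by omega
      have h0m : w[0]'(by omega) = w[m]'(by omega) := by
        have h1 : t[0]'htne = w[0]'(by omega) := hpre.getElem htne
        have h2 : (w.drop m)[0]'(by rw [List.length_drop]; omega) = w[m]'(by omega) := by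
          rw [List.getElem_drop]
          exact getElem_congr' w (m+0) m (by omega) (by omega)
        rw [← h1, ← h2]
        congr 1
        exact ht_drop.symm
      have hbw : b = w[m-1]'(by omega) := by
        rw [hb', List.getElem_take]
        exact getElem_congr' w (v.length - 1) (m - 1) (by omega) (by omega)
      rw [haw, h0m, hbw]
      exact hred
  · intro u _ hul
    have h2 : (wInv u).length = k := by
      rw [wInv, List.length_reverse, List.length_map]; exact hul
    unfold occf occ
    rw [key u hul, key (wInv u) h2]
end

section
/- Let n ≥ 2, k ≥ 2, and fix any orientation section σ. Then the kernel of p←_k − p→_k : M_k → M_{k−1} is generated as a ℤ-module by its elements all of whose coordinates are nonnegative. -/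
open List

/-- Oriented reduced words of length `k`. -/
structure RW (n k : ℕ) where
  val : List (Letter n)
  red : Reduced val
  len : val.length = k

instance (n k : ℕ) : DecidableEq (RW n k) := fun a b =>
  decidable_of_iff (a.val = b.val)
    ⟨fun h => by cases a; cases b; cases h; rfl, fun h => congrArg RW.val h⟩

/-- Identify a reduced word with its inverse: the quotient is the set `W_k` of
unoriented words of length `k`. -/
instance uwSetoid (n k : ℕ) : Setoid (RW n k) where
  r u v := v.val = u.val ∨ v.val = wInv u.val
  iseqv := by
    refine ⟨fun u => Or.inl rfl, ?_, ?_⟩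
    · rintro u v (h | h)
      · exact Or.inl h.symm
      · exact Or.inr (by rw [h, wInv_wInv])
    · rintro u v w (h1 | h1) (h2 | h2)
      · exact Or.inl (h2.trans h1)
      · exact Or.inr (h2.trans (congrArg wInv h1))
      · exact Or.inr (h2.trans h1)
      · exact Or.inl (by rw [h2, h1, wInv_wInv])

instance (n k : ℕ) : ∀ a b : RW n k, Decidable (a ≈ b) := fun a b =>
  show Decidable (b.val = a.val ∨ b.val = wInv a.val) from inferInstance

/-- `W_k` : unoriented reduced words of length `k`. -/
abbrev UW (n k : ℕ) := Quotient (uwSetoid n k)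

def toVec (n k : ℕ) (u : RW n k) : List.Vector (Letter n) k := ⟨u.val, u.len⟩

lemma toVec_inj (n k : ℕ) : Function.Injective (toVec n k) := by
  intro a b h
  have h' : a.val = b.val := congrArg Subtype.val h
  cases a; cases b; cases h'; rfl

noncomputable instance (n k : ℕ) : Fintype (RW n k) :=
  Fintype.ofInjective _ (toVec_inj n k)

noncomputable example (n k : ℕ) : Fintype (UW n k) := inferInstance
noncomputable example (n k : ℕ) : DecidableEq (UW n k) := inferInstance

/-- `M_k` : the free ℤ-module on `W_k`, realized as functions `W_k → ℤ`. -/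
abbrev Mk (n k : ℕ) := UW n k → ℤ

/-- `π_k` of the cyclic word represented by `w` : the vector of occurrence counts
of unoriented words of length `k`. -/
def pik (n k : ℕ) (w : List (Letter n)) : Mk n k :=
  Quotient.lift (fun u : RW n k => (occ u.val w : ℤ)) (by
    intro a b hab
    have h : occ a.val w = occ b.val w := by
      rcases hab with h | h
      · rw [h]
      · rw [h, occ_wInv]
    show ((occ a.val w : ℕ) : ℤ) = ((occ b.val w : ℕ) : ℤ)
    rw [h])

lemma Reduced.drop' {n : ℕ} {w : List (Letter n)} (h : Reduced w) (m : ℕ) :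
    Reduced (w.drop m) :=
  List.IsChain.suffix h (List.drop_suffix m w)

lemma Reduced.dropLast' {n : ℕ} {w : List (Letter n)} (h : Reduced w) :
    Reduced w.dropLast :=
  List.IsChain.prefix h (List.dropLast_prefix w)

/-- The unoriented `(k-1)`-suffix of an oriented word of length `k`. -/
def sufC {n k : ℕ} (w : RW n k) : UW n (k - 1) :=
  Quotient.mk (uwSetoid n (k - 1)) ⟨w.val.drop 1, w.red.drop' 1, by simp [w.len]⟩

/-- The unoriented `(k-1)`-prefix of an oriented word of length `k`. -/
def preC {n k : ℕ} (w : RW n k) : UW n (k - 1) :=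
  Quotient.mk (uwSetoid n (k - 1)) ⟨w.val.dropLast, w.red.dropLast', by simp [w.len]⟩

/-- Matrix of `p←_k` w.r.t. the orientation section `σ`: a basis element `w̄` of `M_k`
is sent to the sum of the unoriented `(k-1)`-words at its outward-pointing ends. -/
noncomputable def AOut (n k : ℕ) (σ : List (Letter n) → List (Letter n)) :
    Matrix (UW n (k - 1)) (UW n k) ℤ := fun ub wb =>
  ∑ w : RW n k,
    if Quotient.mk (uwSetoid n k) w = wb ∧ σ w.val = w.val then
      ((if sufC w = ub ∧ σ (w.val.drop 1) = w.val.drop 1 then 1 else 0) +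
       (if preC w = ub ∧ σ (w.val.dropLast) = wInv (w.val.dropLast) then 1 else 0))
    else 0

/-- Matrix of `p→_k` : inward-pointing ends. -/
noncomputable def AIn (n k : ℕ) (σ : List (Letter n) → List (Letter n)) :
    Matrix (UW n (k - 1)) (UW n k) ℤ := fun ub wb =>
  ∑ w : RW n k,
    if Quotient.mk (uwSetoid n k) w = wb ∧ σ w.val = w.val then
      ((if sufC w = ub ∧ σ (w.val.drop 1) = wInv (w.val.drop 1) then 1 else 0) +
       (if preC w = ub ∧ σ (w.val.dropLast) = w.val.dropLast then 1 else 0))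
    else 0

/-- `p←_k : M_k → M_{k-1}`. -/
noncomputable def pOut (n k : ℕ) (σ : List (Letter n) → List (Letter n)) :
    Mk n k →ₗ[ℤ] Mk n (k - 1) := (AOut n k σ).mulVecLin

/-- `p→_k : M_k → M_{k-1}`. -/
noncomputable def pIn (n k : ℕ) (σ : List (Letter n) → List (Letter n)) :
    Mk n k →ₗ[ℤ] Mk n (k - 1) := (AIn n k σ).mulVecLin


section AuxHelpers

variable {n k : ℕ}

lemma linv_ne_self (a : Letter n) : linv a ≠ a := by
  cases a with
  | mk x b => simp [linv]

lemma ne_linv_flip {a b : Letter n} (h : b ≠ linv a) : a ≠ linv b := by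
  intro h'; exact h (by rw [h', linv_linv])

@[simp] lemma wInv_length (w : List (Letter n)) : (wInv w).length = w.length := by
  simp [wInv]

lemma wInv_eq_iff {a b : List (Letter n)} : wInv a = b ↔ a = wInv b :=
  ⟨fun h => by rw [← h, wInv_wInv], fun h => by rw [h, wInv_wInv]⟩

lemma reduced_wInv {w : List (Letter n)} (h : Reduced w) : Reduced (wInv w) := by
  unfold Reduced wInv
  simp only [List.Chain']
  rw [List.isChain_reverse, List.isChain_map]
  refine h.imp ?_
  intro a b hab
  show linv a ≠ linv (linv b)
  rw [linv_linv]
  exact fun hc => hab hc.symm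

lemma wInv_getElem {w : List (Letter n)} {i : ℕ} (hi : i < w.length) :
    (wInv w)[i]'(by simpa using hi) = linv (w[w.length - 1 - i]'(by omega)) := by
  simp only [wInv, List.getElem_reverse, List.getElem_map, List.length_map]

lemma wInv_ne_self {w : List (Letter n)} (hw : Reduced w) (hne : w ≠ []) :
    wInv w ≠ w := by
  intro h
  have hl : 0 < w.length := List.length_pos_iff.mpr hne
  have key : ∀ i (hi : i < w.length) (j) (hj : j < w.length), i + j + 1 = w.length →
      w[i]'hi = linv (w[j]'hj) := by
    intro i hi j hj hij
    have e : (wInv w)[i]'(by simpa using hi) = w[i]'hi := by simp only [h]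
    rw [← e, wInv_getElem hi]
    have hidx : w.length - 1 - i = j := by omega
    simp [hidx]
  rcases Nat.even_or_odd w.length with he | ho
  · obtain ⟨q, hq⟩ := he
    have hchain := List.isChain_iff_getElem.mp hw (q - 1) (by omega)
    have hk := key q (by omega) (q - 1) (by omega) (by omega)
    have h1 : q - 1 + 1 = q := by omega
    apply hchain
    simp only [h1]
    exact hk
  · obtain ⟨q, hq⟩ := ho
    exact linv_ne_self _ (key q (by omega) q (by omega) (by omega)).symm

lemma drop_one_wInv (w : List (Letter n)) : (wInv w).drop 1 = wInv w.dropLast := by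
  simp only [wInv, List.drop_one, List.tail_reverse, List.map_dropLast]

lemma dropLast_wInv (w : List (Letter n)) : (wInv w).dropLast = wInv (w.drop 1) := by
  have := drop_one_wInv (wInv w)
  rw [wInv_wInv] at this
  rw [this, wInv_wInv]

/-- The involution on oriented reduced words given by inversion. -/
def iotaRW (n k : ℕ) (w : RW n k) : RW n k :=
  ⟨wInv w.val, reduced_wInv w.red, by simp [w.len]⟩

lemma RW.ext' {a b : RW n k} (h : a.val = b.val) : a = b := by
  cases a; cases b; cases h; rfl

lemma iota_invol : Function.Involutive (iotaRW n k) := by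
  intro w
  apply RW.ext'
  simp [iotaRW]

/-- Counting reduced words of length `k` with a prescribed suffix of length `k-1`. -/
lemma card_drop_one_eq (hn : 0 < n) (hk : 2 ≤ k) (t : List (Letter n)) (ht : Reduced t)
    (htl : t.length = k - 1) :
    (Finset.univ.filter (fun w : RW n k => w.val.drop 1 = t)).card
      = Fintype.card (Letter n) - 1 := by
  classical
  haveI : Inhabited (Letter n) := ⟨(⟨0, hn⟩, true)⟩
  obtain ⟨b, t', rfl⟩ : ∃ b t'', t = b :: t'' := by
    cases t with
    | nil => simp at htl; omega
    | cons b t'' => exact ⟨b, t'', rfl⟩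
  have hcard : (Finset.univ.filter (fun a : Letter n => a ≠ linv b)).card
      = Fintype.card (Letter n) - 1 := by
    rw [Finset.filter_ne', Finset.card_erase_of_mem (Finset.mem_univ _),
      Finset.card_univ]
  rw [← hcard]
  have decomp : ∀ w : RW n k, w.val.drop 1 = b :: t' → w.val = w.val.headI :: b :: t' := by
    intro w hw
    obtain ⟨c, rest, hv⟩ : ∃ c rest, w.val = c :: rest := by
      cases hval : w.val with
      | nil => exfalso; have := w.len; rw [hval] at this; simp at this; omega
      | cons c rest => exact ⟨c, rest, rfl⟩
    rw [hv] at hw ⊢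
    simp only [List.drop_one, List.tail_cons] at hw
    rw [hw]
    rfl
  refine Finset.card_bij' (fun w _ => w.val.headI)
    (fun a ha => (⟨a :: b :: t', by
        rw [Reduced]; simp only [List.Chain']; rw [List.isChain_cons_cons]
        exact ⟨fun hc => (Finset.mem_filter.mp ha).2 (by rw [hc, linv_linv]), ht⟩, by
        simp only [List.length_cons]
        simp only [List.length_cons] at htl
        omega⟩ : RW n k)) ?_ ?_ ?_ ?_
  · -- i maps into target
    intro w hw
    rw [Finset.mem_filter] at hw ⊢
    refine ⟨Finset.mem_univ _, ?_⟩
    have hv := decomp w hw.2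
    have hred := w.red
    rw [Reduced] at hred
    simp only [List.Chain'] at hred; rw [hv, List.isChain_cons_cons] at hred
    exact ne_linv_flip hred.1
  · -- j maps into source
    intro a ha
    rw [Finset.mem_filter]
    exact ⟨Finset.mem_univ _, by simp⟩
  · -- left inverse
    intro w hw
    rw [Finset.mem_filter] at hw
    apply RW.ext'
    exact (decomp w hw.2).symm
  · -- right inverse
    intro a ha
    rfl

end AuxHelpers

section KeyConditions

variable {n k : ℕ} (σ : List (Letter n) → List (Letter n))

lemma exists_canonical (hσ1 : ∀ u : List (Letter n), σ u = u ∨ σ u = wInv u)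
    (hσ2 : ∀ u : List (Letter n), σ (wInv u) = σ u) (ub : UW n (k-1)) :
    ∃ t : RW n (k-1), σ t.val = t.val ∧ Quotient.mk (uwSetoid n (k-1)) t = ub := by
  obtain ⟨r, hr⟩ := Quotient.exists_rep ub
  rcases hσ1 r.val with h | h
  · exact ⟨r, h, hr⟩
  · refine ⟨⟨wInv r.val, reduced_wInv r.red, by simp [r.len]⟩, ?_, ?_⟩
    · simp only
      rw [hσ2, h]
    · rw [← hr]
      exact Quotient.sound (Or.inr (wInv_wInv r.val).symm)

lemma key_cond_out (hk : 2 ≤ k)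
    (hσ1 : ∀ u : List (Letter n), σ u = u ∨ σ u = wInv u)
    (hσ2 : ∀ u : List (Letter n), σ (wInv u) = σ u)
    (t : RW n (k-1)) (hσt : σ t.val = t.val) (u : RW n (k-1)) :
    (Quotient.mk (uwSetoid n (k-1)) u = Quotient.mk (uwSetoid n (k-1)) t
      ∧ σ u.val = u.val) ↔ u.val = t.val := by
  have hune : u.val ≠ [] := by
    intro hc
    have := u.len; rw [hc] at this; simp at this; omega
  constructor
  · rintro ⟨hq, hσu⟩
    have hrel := Quotient.exact hq
    rcases hrel with h | h
    · exact h.symm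
    · exfalso
      have hu : u.val = wInv t.val := by rw [h, wInv_wInv]
      have : σ u.val = wInv u.val := by
        rw [hu, hσ2, hσt, wInv_wInv]
      rw [hσu] at this
      exact wInv_ne_self u.red hune this.symm
  · intro h
    refine ⟨Quotient.sound (Or.inl h.symm), by rw [h, hσt]⟩

lemma key_cond_in (hk : 2 ≤ k)
    (hσ1 : ∀ u : List (Letter n), σ u = u ∨ σ u = wInv u)
    (hσ2 : ∀ u : List (Letter n), σ (wInv u) = σ u)
    (t : RW n (k-1)) (hσt : σ t.val = t.val) (u : RW n (k-1)) :
    (Quotient.mk (uwSetoid n (k-1)) u = Quotient.mk (uwSetoid n (k-1)) t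
      ∧ σ u.val = wInv u.val) ↔ u.val = wInv t.val := by
  have hune : u.val ≠ [] := by
    intro hc
    have := u.len; rw [hc] at this; simp at this; omega
  constructor
  · rintro ⟨hq, hσu⟩
    have hrel := Quotient.exact hq
    rcases hrel with h | h
    · exfalso
      have : σ u.val = u.val := by rw [← h, hσt, h]
      rw [hσu] at this
      exact wInv_ne_self u.red hune this
    · rw [h, wInv_wInv]
  · intro h
    constructor
    · refine Quotient.sound (Or.inr ?_)
      rw [h, wInv_wInv]
    · rw [h, hσ2, hσt, wInv_wInv]

end KeyConditions

section RowSums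

variable {n k : ℕ}

lemma rowsum_eq (hn : 0 < n) (hk : 2 ≤ k) (σ : List (Letter n) → List (Letter n))
    (hσ1 : ∀ u : List (Letter n), σ u = u ∨ σ u = wInv u)
    (hσ2 : ∀ u : List (Letter n), σ (wInv u) = σ u) (ub : UW n (k-1)) :
    ∑ wb : UW n k, AOut n k σ ub wb = ∑ wb : UW n k, AIn n k σ ub wb := by
  classical
  obtain ⟨t, hσt, htub⟩ := exists_canonical σ hσ1 hσ2 ub
  have hkne : ∀ w : RW n k, w.val ≠ [] := by
    intro w hc
    have := w.len; rw [hc] at this; simp at this; omega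
  -- collapse the sum over wb
  have collapse : ∀ (C : RW n k → ℤ),
      ∑ wb : UW n k, ∑ w : RW n k,
        (if Quotient.mk (uwSetoid n k) w = wb ∧ σ w.val = w.val then C w else 0)
      = ∑ w : RW n k, (if σ w.val = w.val then C w else 0) := by
    intro C
    rw [Finset.sum_comm]
    refine Finset.sum_congr rfl fun w _ => ?_
    simp only [ite_and]
    rw [Finset.sum_ite_eq (Finset.univ) (Quotient.mk (uwSetoid n k) w)
      (fun _ => if σ w.val = w.val then C w else 0)]
    simp
  -- rewrite conditions using key lemmas
  have hsufout : ∀ w : RW n k,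
      (sufC w = ub ∧ σ (w.val.drop 1) = w.val.drop 1) ↔ w.val.drop 1 = t.val := by
    intro w
    rw [← htub]
    exact key_cond_out σ hk hσ1 hσ2 t hσt ⟨w.val.drop 1, w.red.drop' 1, by simp [w.len]⟩
  have hsufin : ∀ w : RW n k,
      (sufC w = ub ∧ σ (w.val.drop 1) = wInv (w.val.drop 1)) ↔
        w.val.drop 1 = wInv t.val := by
    intro w
    rw [← htub]
    exact key_cond_in σ hk hσ1 hσ2 t hσt ⟨w.val.drop 1, w.red.drop' 1, by simp [w.len]⟩
  have hpreout : ∀ w : RW n k,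
      (preC w = ub ∧ σ (w.val.dropLast) = wInv (w.val.dropLast)) ↔
        w.val.dropLast = wInv t.val := by
    intro w
    rw [← htub]
    exact key_cond_in σ hk hσ1 hσ2 t hσt ⟨w.val.dropLast, w.red.dropLast', by simp [w.len]⟩
  have hprein : ∀ w : RW n k,
      (preC w = ub ∧ σ (w.val.dropLast) = w.val.dropLast) ↔
        w.val.dropLast = t.val := by
    intro w
    rw [← htub]
    exact key_cond_out σ hk hσ1 hσ2 t hσt ⟨w.val.dropLast, w.red.dropLast', by simp [w.len]⟩
  simp only [AOut, AIn]
  rw [collapse, collapse]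
  have step1 : ∀ w : RW n k,
      ((if sufC w = ub ∧ σ (w.val.drop 1) = w.val.drop 1 then (1:ℤ) else 0) +
       (if preC w = ub ∧ σ (w.val.dropLast) = wInv (w.val.dropLast) then 1 else 0))
      = ((if w.val.drop 1 = t.val then (1:ℤ) else 0) +
         (if w.val.dropLast = wInv t.val then 1 else 0)) := by
    intro w
    rw [if_congr (hsufout w) rfl rfl, if_congr (hpreout w) rfl rfl]
  have step2 : ∀ w : RW n k,
      ((if sufC w = ub ∧ σ (w.val.drop 1) = wInv (w.val.drop 1) then (1:ℤ) else 0) +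
       (if preC w = ub ∧ σ (w.val.dropLast) = w.val.dropLast then 1 else 0))
      = ((if w.val.drop 1 = wInv t.val then (1:ℤ) else 0) +
         (if w.val.dropLast = t.val then 1 else 0)) := by
    intro w
    rw [if_congr (hsufin w) rfl rfl, if_congr (hprein w) rfl rfl]
  simp only [step1, step2]
  -- split sums
  have split : ∀ (f g : RW n k → ℤ),
      ∑ w : RW n k, (if σ w.val = w.val then f w + g w else 0)
      = (∑ w : RW n k, (if σ w.val = w.val then f w else 0)) +
        (∑ w : RW n k, (if σ w.val = w.val then g w else 0)) := by
    intro f g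
    rw [← Finset.sum_add_distrib]
    refine Finset.sum_congr rfl fun w _ => ?_
    by_cases h : σ w.val = w.val <;> simp [h]
  rw [split, split]
  -- reindex the dropLast sums by the inversion involution
  have reindex : ∀ u : List (Letter n),
      ∑ w : RW n k, (if σ w.val = w.val then
          (if w.val.dropLast = u then (1:ℤ) else 0) else 0)
      = ∑ w : RW n k, (if σ (wInv w.val) = wInv w.val then
          (if w.val.drop 1 = wInv u then (1:ℤ) else 0) else 0) := by
    intro u
    refine Fintype.sum_bijective (iotaRW n k) (iota_invol.bijective) _ _ ?_
    intro w
    have h1 : (iotaRW n k w).val = wInv w.val := rfl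
    rw [h1, wInv_wInv, drop_one_wInv]
    refine if_congr Iff.rfl (if_congr ?_ rfl rfl) rfl
    constructor
    · rintro rfl; rfl
    · intro h
      rw [← wInv_wInv w.val.dropLast, h, wInv_wInv]
  have merge : ∀ X : RW n k → ℤ,
      (∑ w : RW n k, (if σ w.val = w.val then X w else 0)) +
      (∑ w : RW n k, (if σ (wInv w.val) = wInv w.val then X w else 0))
      = ∑ w : RW n k, X w := by
    intro X
    rw [← Finset.sum_add_distrib]
    refine Finset.sum_congr rfl fun w _ => ?_
    rcases hσ1 w.val with h | h
    · rw [if_pos h, if_neg, add_zero]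
      intro hc
      rw [hσ2, h] at hc
      exact wInv_ne_self w.red (hkne w) hc.symm
    · have hne : σ w.val ≠ w.val := by
        rw [h]; exact wInv_ne_self w.red (hkne w)
      rw [if_neg hne, if_pos (by rw [hσ2, h]), zero_add]
  rw [reindex (wInv t.val), reindex t.val]
  simp only [wInv_wInv]
  rw [merge, merge]
  rw [Finset.sum_boole, Finset.sum_boole]
  congr 1
  rw [card_drop_one_eq hn hk t.val t.red t.len,
    card_drop_one_eq hn hk (wInv t.val) (reduced_wInv t.red) (by simp [t.len])]

end RowSums

/-- The kernel of `p←_k - p→_k` is generated as a ℤ-module by its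
nonnegative elements. -/
theorem ker_generated_by_nonneg (n k : ℕ) (hn : 2 ≤ n) (hk : 2 ≤ k)
    (σ : List (Letter n) → List (Letter n))
    (hσ1 : ∀ u : List (Letter n), σ u = u ∨ σ u = wInv u)
    (hσ2 : ∀ u : List (Letter n), σ (wInv u) = σ u) :
    Submodule.span ℤ
        {f : Mk n k | (∀ ub : UW n k, 0 ≤ f ub) ∧
          f ∈ LinearMap.ker (pOut n k σ - pIn n k σ)}
      = LinearMap.ker (pOut n k σ - pIn n k σ) := by
  classical
  have hone : (fun _ : UW n k => (1:ℤ)) ∈ LinearMap.ker (pOut n k σ - pIn n k σ) := by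
    rw [LinearMap.mem_ker]
    funext ub
    simp only [LinearMap.sub_apply, pOut, pIn, Matrix.mulVecLin_apply, Pi.sub_apply,
      Pi.zero_apply]
    show (AOut n k σ).mulVec _ ub - (AIn n k σ).mulVec _ ub = 0
    simp only [Matrix.mulVec, dotProduct, mul_one]
    rw [rowsum_eq (by omega) hk σ hσ1 hσ2 ub, sub_self]
  apply _root_.le_antisymm
  · rw [Submodule.span_le]
    intro f hf
    exact hf.2
  · intro f hf
    set one : Mk n k := (fun _ : UW n k => (1:ℤ)) with hone_def
    set N : ℤ := ∑ ub : UW n k, |f ub| with hN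
    have hNub : ∀ ub, |f ub| ≤ N := fun ub =>
      Finset.single_le_sum (fun i _ => abs_nonneg (f i)) (Finset.mem_univ ub)
    have hN0 : 0 ≤ N := Finset.sum_nonneg fun i _ => abs_nonneg _
    have hsmul : ∀ ub : UW n k, (N • one) ub = N := by
      intro ub
      simp [hone_def]
    have h1 : f + N • one ∈ Submodule.span ℤ
        {g : Mk n k | (∀ ub : UW n k, 0 ≤ g ub) ∧
          g ∈ LinearMap.ker (pOut n k σ - pIn n k σ)} := by
      apply Submodule.subset_span
      refine ⟨?_, ?_⟩
      · intro ub
        have h2 : -(f ub) ≤ |f ub| := neg_le_abs (f ub)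
        have := hNub ub
        show 0 ≤ f ub + (N • one) ub
        rw [hsmul]
        linarith
      · exact Submodule.add_mem _ hf (Submodule.smul_mem _ N hone)
    have h2 : N • one ∈ Submodule.span ℤ
        {g : Mk n k | (∀ ub : UW n k, 0 ≤ g ub) ∧
          g ∈ LinearMap.ker (pOut n k σ - pIn n k σ)} := by
      apply Submodule.subset_span
      refine ⟨?_, Submodule.smul_mem _ N hone⟩
      intro ub
      rw [hsmul]
      exact hN0
    have heq : f = (f + N • one) - N • one := by abel
    rw [heq]
    exact Submodule.sub_mem _ h1 h2
end
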